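/- arXiv:1207.6141 — 6 statements merged into one kernel-verified Lean document; each statement's English description precedes it below -/
import Mathlib

section
/- Cycles are rooted-contractible: for every n ≥ 3, the cycle C_n is rooted-contractible, i.e., every graph G that contains a C_n-scheme contains C_n as a rooted minor. -/
open SimpleGraph

/-- An `H`-scheme in `G`, where the embedding `f` identifies the vertices of `H`
with vertices of `G`.  It is a collection of paths `P_{uv}` in `G`, one for each
edge `uv` of `H`, such that `P_{uv}` is a `u,v`-path meeting `V(H)` exactly in
`{u, v}`, and any collection of edges of `H` whose paths share a common vertex
of `G` must have a common endpoint in `H`. -/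
structure HScheme {α β : Type} (H : SimpleGraph α) (G : SimpleGraph β) (f : α ↪ β) where
  path : ∀ u v, H.Adj u v → G.Walk (f u) (f v)
  path_symm : ∀ u v (h : H.Adj u v), path v u h.symm = (path u v h).reverse
  path_isPath : ∀ u v (h : H.Adj u v), (path u v h).IsPath
  root_mem : ∀ u v (h : H.Adj u v) (w : α), f w ∈ (path u v h).support → w = u ∨ w = v
  common_endpoint : ∀ x : β,
    (∃ u v, ∃ h : H.Adj u v, x ∈ (path u v h).support) →
    ∃ z : α, ∀ u v (h : H.Adj u v), x ∈ (path u v h).support → z = u ∨ z = v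

/-- `G` contains `H` as a rooted minor: pairwise disjoint connected branch sets
`C v ⊆ V(G)`, one for each vertex `v` of `H`, with `f v ∈ C v`, such that for every
edge `uv` of `H` there is an edge of `G` between `C u` and `C v`. -/
def RootedMinor {α β : Type} (H : SimpleGraph α) (G : SimpleGraph β) (f : α ↪ β) : Prop :=
  ∃ C : α → Set β,
    (∀ v, f v ∈ C v) ∧
    (∀ v, (G.induce (C v)).Connected) ∧
    (Pairwise fun u v => Disjoint (C u) (C v)) ∧
    (∀ u v, H.Adj u v → ∃ x ∈ C u, ∃ y ∈ C v, G.Adj x y)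

/-- `G` contains `H` as a minor: pairwise disjoint connected branch sets, one for each
vertex of `H`, such that for every edge `uv` of `H` there is an edge of `G` between the
corresponding branch sets. -/
def HasMinor {β α : Type} (G : SimpleGraph β) (H : SimpleGraph α) : Prop :=
  ∃ C : α → Set β,
    (∀ v, (G.induce (C v)).Connected) ∧
    (Pairwise fun u v => Disjoint (C u) (C v)) ∧
    (∀ u v, H.Adj u v → ∃ x ∈ C u, ∃ y ∈ C v, G.Adj x y)

/-- `H` is rooted-contractible: every (finite) graph `G` containing an `H`-scheme
contains `H` as a rooted minor. -/
def IsRootedContractible {α : Type} (H : SimpleGraph α) : Prop :=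
  ∀ (β : Type) [Fintype β] (G : SimpleGraph β) (f : α ↪ β),
    Nonempty (HScheme H G f) → RootedMinor H G f

/-- `H` is weakly rooted-contractible: every (finite) graph `G` containing an
`H`-scheme contains `H` as a minor. -/
def IsWeaklyRootedContractible {α : Type} (H : SimpleGraph α) : Prop :=
  ∀ (β : Type) [Fintype β] (G : SimpleGraph β) (f : α ↪ β),
    Nonempty (HScheme H G f) → HasMinor G H

namespace CycCut

/-! Abstract cyclic cut lemma.  `lo u`, `hi u` describe, for the `u`-th "link",
the fiber interval `[lo u c, hi u c]` of admissible values `t_u` given `t_{u+1} = c`. -/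

variable (lo hi : ℕ → ℕ → ℕ)

/-- Upper end of the fiber of the composition of links `0,...,j-1` over input `c`. -/
noncomputable def HI : ℕ → ℕ → ℕ
  | 0 => id
  | j+1 => fun c => (Finset.Icc (lo j c) (hi j c)).sup (HI j)

/-- Lower end of the fiber of the composition of links `0,...,j-1` over input `c`. -/
noncomputable def LO : ℕ → ℕ → ℕ
  | 0 => id
  | j+1 => fun c => sInf ((LO j) '' (Set.Icc (lo j c) (hi j c)))

variable {lo hi}
variable (h1 : ∀ u c, lo u c ≤ hi u c)
variable (h2 : ∀ u c, lo u c ≤ hi u (c+1) + 1)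
variable (h3 : ∀ u c, lo u (c+1) ≤ hi u c)

section basic
include h1

lemma lo_mem_Icc (j c : ℕ) : lo j c ∈ Finset.Icc (lo j c) (hi j c) := by
  simp [h1 j c]

lemma LO_le {j c b : ℕ} (hb : b ∈ Finset.Icc (lo j c) (hi j c)) :
    LO lo hi (j+1) c ≤ LO lo hi j b := by
  apply Nat.sInf_le
  exact ⟨b, by simpa using hb, rfl⟩

lemma le_HI {j c b : ℕ} (hb : b ∈ Finset.Icc (lo j c) (hi j c)) :
    HI lo hi j b ≤ HI lo hi (j+1) c :=
  Finset.le_sup hb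

lemma LO_attained (j c : ℕ) : ∃ b ∈ Finset.Icc (lo j c) (hi j c),
    LO lo hi j b = LO lo hi (j+1) c := by
  have hne : ((LO lo hi j) '' (Set.Icc (lo j c) (hi j c))).Nonempty :=
    ⟨_, ⟨lo j c, by simp [h1 j c], rfl⟩⟩
  obtain ⟨b, hb, hbe⟩ := Nat.sInf_mem hne
  exact ⟨b, by simpa using hb, hbe⟩

lemma HI_attained (j c : ℕ) : ∃ b ∈ Finset.Icc (lo j c) (hi j c),
    HI lo hi j b = HI lo hi (j+1) c := by
  obtain ⟨b, hb, hbe⟩ := Finset.exists_mem_eq_sup _ ⟨lo j c, lo_mem_Icc h1 j c⟩ (HI lo hi j)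
  exact ⟨b, hb, hbe.symm⟩

lemma LO_le_HI (j c : ℕ) : LO lo hi j c ≤ HI lo hi j c := by
  induction j generalizing c with
  | zero => simp [LO, HI]
  | succ j ih =>
      calc LO lo hi (j+1) c ≤ LO lo hi j (lo j c) := LO_le h1 (lo_mem_Icc h1 j c)
        _ ≤ HI lo hi j (lo j c) := ih _
        _ ≤ HI lo hi (j+1) c := le_HI h1 (lo_mem_Icc h1 j c)

end basic

/-- Touching of consecutive composed fibers, in both directions. -/
lemma touching (h1 : ∀ u c, lo u c ≤ hi u c) (h2 : ∀ u c, lo u c ≤ hi u (c+1) + 1)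
    (h3 : ∀ u c, lo u (c+1) ≤ hi u c) (j : ℕ) :
    ∀ c, LO lo hi j c ≤ HI lo hi j (c+1) + 1 ∧ LO lo hi j (c+1) ≤ HI lo hi j c + 1 := by
  induction j with
  | zero => intro c; constructor <;> simp [LO, HI] <;> omega
  | succ j ih =>
      intro c
      by_cases hov : lo j c ≤ hi j (c+1)
      · -- fibers of link `j` at `c` and `c+1` overlap at `b₀`
        set b₀ := max (lo j c) (lo j (c+1)) with hb₀
        have hmc : b₀ ∈ Finset.Icc (lo j c) (hi j c) := by
          simp only [Finset.mem_Icc, hb₀]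
          exact ⟨le_max_left _ _, max_le (h1 j c) (h3 j c)⟩
        have hmc1 : b₀ ∈ Finset.Icc (lo j (c+1)) (hi j (c+1)) := by
          simp only [Finset.mem_Icc, hb₀]
          exact ⟨le_max_right _ _, max_le hov (h1 j (c+1))⟩
        constructor
        · calc LO lo hi (j+1) c ≤ LO lo hi j b₀ := LO_le h1 hmc
            _ ≤ HI lo hi j b₀ := LO_le_HI h1 _ _
            _ ≤ HI lo hi (j+1) (c+1) := le_HI h1 hmc1
            _ ≤ _ := Nat.le_succ _
        · calc LO lo hi (j+1) (c+1) ≤ LO lo hi j b₀ := LO_le h1 hmc1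
            _ ≤ HI lo hi j b₀ := LO_le_HI h1 _ _
            _ ≤ HI lo hi (j+1) c := le_HI h1 hmc
            _ ≤ _ := Nat.le_succ _
      · -- tight case: `lo j c = hi j (c+1) + 1`
        push_neg at hov
        have htight : lo j c = hi j (c+1) + 1 := le_antisymm (h2 j c) hov
        set b₁ := lo j c with hb₁
        have hb₁1 : b₁ - 1 = hi j (c+1) := by omega
        have hmem : b₁ ∈ Finset.Icc (lo j c) (hi j c) := lo_mem_Icc h1 j c
        have hmem' : b₁ - 1 ∈ Finset.Icc (lo j (c+1)) (hi j (c+1)) := by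
          simp only [Finset.mem_Icc]
          exact ⟨by rw [hb₁1]; exact h1 j (c+1), by rw [hb₁1]⟩
        have hsucc : (b₁ - 1) + 1 = b₁ := by omega
        constructor
        · calc LO lo hi (j+1) c ≤ LO lo hi j b₁ := LO_le h1 hmem
            _ = LO lo hi j ((b₁ - 1) + 1) := by rw [hsucc]
            _ ≤ HI lo hi j (b₁ - 1) + 1 := (ih (b₁ - 1)).2
            _ ≤ HI lo hi (j+1) (c+1) + 1 := by
                have := le_HI h1 (j := j) hmem'; omega
        · calc LO lo hi (j+1) (c+1) ≤ LO lo hi j (b₁ - 1) := LO_le h1 hmem'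
            _ ≤ HI lo hi j ((b₁ - 1) + 1) + 1 := (ih (b₁ - 1)).1
            _ = HI lo hi j b₁ + 1 := by rw [hsucc]
            _ ≤ HI lo hi (j+1) c + 1 := by
                have := le_HI h1 (j := j) hmem; omega

open Classical in
/-- Crossing helper. -/
lemma exists_cross {P : ℕ → Prop} {a b : ℕ} (hab : a ≤ b) (ha : P a) (hb : ¬ P b) :
    ∃ k, a ≤ k ∧ k < b ∧ P k ∧ ¬ P (k + 1) := by
  induction b with
  | zero =>
      exact absurd (Nat.le_zero.mp hab ▸ ha) hb
  | succ b ih =>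
      by_cases hab' : a = b + 1
      · subst hab'; exact absurd ha hb
      · have hab2 : a ≤ b := by omega
        by_cases hPb : P b
        · exact ⟨b, hab2, Nat.lt_succ_self b, hPb, hb⟩
        · obtain ⟨k, h₁, h₂, h₃, h₄⟩ := ih hab2 hPb
          exact ⟨k, h₁, by omega, h₃, h₄⟩


/-- Reachability through links `0,...,j-1`. -/
def Reach (lo hi : ℕ → ℕ → ℕ) (j a c : ℕ) : Prop :=
  ∃ t : ℕ → ℕ, t 0 = a ∧ t j = c ∧
    ∀ i < j, lo i (t (i+1)) ≤ t i ∧ t i ≤ hi i (t (i+1))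

/-- Every point of the composed fiber interval is reachable. -/
lemma reach_of_mem (h1 : ∀ u c, lo u c ≤ hi u c) (h2 : ∀ u c, lo u c ≤ hi u (c+1) + 1)
    (h3 : ∀ u c, lo u (c+1) ≤ hi u c) (j : ℕ) :
    ∀ c a, LO lo hi j c ≤ a → a ≤ HI lo hi j c → Reach lo hi j a c := by
  induction j with
  | zero =>
      intro c a hl hh
      simp only [LO, HI, id] at hl hh
      have : a = c := le_antisymm hh hl
      subst this
      exact ⟨fun _ => a, rfl, rfl, fun i h => absurd h (Nat.not_lt_zero i)⟩
  | succ j ih =>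
      intro c a hl hh
      -- find b in the link-j fiber with a in the level-j fiber of b
      obtain ⟨bs, hbs, hbse⟩ := LO_attained h1 (lo := lo) (hi := hi) j c
      obtain ⟨bh, hbh, hbhe⟩ := HI_attained h1 (lo := lo) (hi := hi) j c
      have key : ∃ b ∈ Finset.Icc (lo j c) (hi j c),
          LO lo hi j b ≤ a ∧ a ≤ HI lo hi j b := by
        by_cases hs : a ≤ HI lo hi j bs
        · exact ⟨bs, hbs, by omega, hs⟩
        · push_neg at hs
          -- walk from bs (HI < a) to bh (HI ≥ a)
          have hah : a ≤ HI lo hi j bh := by omega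
          have hne : bs ≠ bh := by
            intro h; rw [h] at hs; omega
          rcases lt_or_gt_of_ne hne with hlt | hgt
          · obtain ⟨k, hk1, hk2, hk3, hk4⟩ :=
              exists_cross (P := fun k => HI lo hi j k < a) (le_of_lt hlt) hs (by omega)
            refine ⟨k+1, ?_, ?_, ?_⟩
            · simp only [Finset.mem_Icc] at hbs hbh ⊢; omega
            · have := (touching h1 h2 h3 j k).2; omega
            · omega
          · obtain ⟨k, hk1, hk2, hk3, hk4⟩ :=
              exists_cross (P := fun k => a ≤ HI lo hi j k) (le_of_lt hgt) hah (by omega)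
            refine ⟨k, ?_, ?_, ?_⟩
            · simp only [Finset.mem_Icc] at hbs hbh ⊢; omega
            · have := (touching h1 h2 h3 j k).1; omega
            · omega
      obtain ⟨b, hbmem, hbl, hbh'⟩ := key
      obtain ⟨t, ht0, htj, htp⟩ := ih b a hbl hbh'
      refine ⟨fun i => if i = j + 1 then c else t i, by simp [ht0], by simp, ?_⟩
      intro i hi'
      by_cases hij : i = j
      · subst hij
        simp only [if_neg (by omega : i ≠ i + 1), if_pos rfl]
        rw [htj]
        simpa [Finset.mem_Icc] using hbmem
      · have hi2 : i < j := by omega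
        have := htp i hi2
        simp only [if_neg (by omega : i ≠ j + 1), if_neg (by omega : i + 1 ≠ j + 1)]
        exact this


/-- A tight chain certificate: a cyclic chain where every link is pinned at a
"corner" of the staircase. -/
def CertU (lo hi : ℕ → ℕ → ℕ) (j c : ℕ) : Prop :=
  ∃ t : ℕ → ℕ, t j = c ∧
    (∀ i < j, t i + 1 = lo i (t (i+1)) ∧ lo i (t (i+1)) = hi i (t (i+1) + 1) + 1) ∧
    t 0 + 1 = LO lo hi j c

def CertD (lo hi : ℕ → ℕ → ℕ) (j c : ℕ) : Prop :=
  ∃ t : ℕ → ℕ, t j = c ∧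
    (∀ i < j, t i + 1 = lo i (t (i+1)) ∧ lo i (t (i+1)) = hi i (t (i+1) + 1) + 1) ∧
    t 0 + 1 = LO lo hi j (c+1)

lemma cert_extend {t : ℕ → ℕ} {j : ℕ} (c : ℕ)
    (hp : ∀ i < j, t i + 1 = lo i (t (i+1)) ∧ lo i (t (i+1)) = hi i (t (i+1) + 1) + 1)
    (hj : t j + 1 = lo j c) (htight : lo j c = hi j (c+1) + 1) :
    ∀ i < j + 1,
      (fun i => if i = j + 1 then c else t i) i + 1
        = lo i ((fun i => if i = j + 1 then c else t i) (i+1)) ∧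
      lo i ((fun i => if i = j + 1 then c else t i) (i+1))
        = hi i ((fun i => if i = j + 1 then c else t i) (i+1) + 1) + 1 := by
  intro i hi'
  by_cases hij : i = j
  · subst hij
    simp only [if_neg (by omega : i ≠ i + 1), if_pos rfl]
    exact ⟨hj, htight⟩
  · have hi2 : i < j := by omega
    simp only [if_neg (by omega : i ≠ j + 1), if_neg (by omega : i + 1 ≠ j + 1)]
    exact hp i hi2

/-- Tightness of the composed fibers unfolds to a full tight chain. -/
lemma cert_of_tight (h1 : ∀ u c, lo u c ≤ hi u c) (h2 : ∀ u c, lo u c ≤ hi u (c+1) + 1)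
    (h3 : ∀ u c, lo u (c+1) ≤ hi u c) (j : ℕ) :
    ∀ c, (LO lo hi j c = HI lo hi j (c+1) + 1 → CertU lo hi j c) ∧
         (LO lo hi j (c+1) = HI lo hi j c + 1 → CertD lo hi j c) := by
  induction j with
  | zero =>
      intro c
      constructor
      · intro h; simp only [LO, HI, id] at h; omega
      · intro h
        exact ⟨fun _ => c, rfl, fun i h' => absurd h' (Nat.not_lt_zero i), by
          simp only [LO, id]⟩
  | succ j ih =>
      intro c
      by_cases hov : lo j c ≤ hi j (c+1)
      · -- overlap: tightness impossible in either direction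
        set b₀ := max (lo j c) (lo j (c+1)) with hb₀
        have hmc : b₀ ∈ Finset.Icc (lo j c) (hi j c) := by
          simp only [Finset.mem_Icc, hb₀]
          exact ⟨le_max_left _ _, max_le (h1 j c) (h3 j c)⟩
        have hmc1 : b₀ ∈ Finset.Icc (lo j (c+1)) (hi j (c+1)) := by
          simp only [Finset.mem_Icc, hb₀]
          exact ⟨le_max_right _ _, max_le hov (h1 j (c+1))⟩
        have k1 := LO_le h1 hmc
        have k2 := le_HI h1 (j := j) hmc1
        have k3 := LO_le h1 hmc1
        have k4 := le_HI h1 (j := j) hmc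
        have k5 := LO_le_HI h1 (lo := lo) (hi := hi) j b₀
        constructor <;> intro h <;> omega
      · push_neg at hov
        have htight : lo j c = hi j (c+1) + 1 := le_antisymm (h2 j c) hov
        set b₁ := lo j c with hb₁
        have hb₁1 : b₁ - 1 = hi j (c+1) := by omega
        have hsucc : (b₁ - 1) + 1 = b₁ := by omega
        have hmem : b₁ ∈ Finset.Icc (lo j c) (hi j c) := lo_mem_Icc h1 j c
        have hmem' : b₁ - 1 ∈ Finset.Icc (lo j (c+1)) (hi j (c+1)) := by
          simp only [Finset.mem_Icc]
          exact ⟨by rw [hb₁1]; exact h1 j (c+1), by rw [hb₁1]⟩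
        constructor
        · intro h
          -- LO (j+1) c = HI (j+1) (c+1) + 1
          have e1 : LO lo hi (j+1) c ≤ LO lo hi j b₁ := LO_le h1 hmem
          have e2 : LO lo hi j ((b₁-1)+1) ≤ HI lo hi j (b₁-1) + 1 := (touching h1 h2 h3 j (b₁-1)).2
          have e3 : HI lo hi j (b₁-1) ≤ HI lo hi (j+1) (c+1) := le_HI h1 hmem'
          rw [hsucc] at e2
          have eq1 : LO lo hi j b₁ = HI lo hi j (b₁-1) + 1 := by omega
          have eq2 : LO lo hi (j+1) c = LO lo hi j b₁ := by omega
          have hD : CertD lo hi j (b₁ - 1) := (ih (b₁ - 1)).2 (by rw [hsucc]; exact eq1)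
          obtain ⟨t, htj, hp, ht0⟩ := hD
          rw [hsucc] at ht0
          refine ⟨fun i => if i = j + 1 then c else t i, by simp, ?_, ?_⟩
          · exact cert_extend c hp (by rw [htj, hsucc]) htight
          · simp only [if_neg (by omega : (0:ℕ) ≠ j + 1)]; omega
        · intro h
          -- LO (j+1) (c+1) = HI (j+1) c + 1
          have e1 : LO lo hi (j+1) (c+1) ≤ LO lo hi j (b₁-1) := LO_le h1 hmem'
          have e2 : LO lo hi j (b₁-1) ≤ HI lo hi j ((b₁-1)+1) + 1 := (touching h1 h2 h3 j (b₁-1)).1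
          rw [hsucc] at e2
          have e3 : HI lo hi j b₁ ≤ HI lo hi (j+1) c := le_HI h1 hmem
          have eq1 : LO lo hi j (b₁-1) = HI lo hi j b₁ + 1 := by omega
          have eq2 : LO lo hi (j+1) (c+1) = LO lo hi j (b₁-1) := by omega
          have hU : CertU lo hi j (b₁ - 1) := (ih (b₁ - 1)).1 (by rw [hsucc]; exact eq1)
          obtain ⟨t, htj, hp, ht0⟩ := hU
          refine ⟨fun i => if i = j + 1 then c else t i, by simp, ?_, ?_⟩
          · exact cert_extend c hp (by rw [htj, hsucc]) htight
          · simp only [if_neg (by omega : (0:ℕ) ≠ j + 1)]; omega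

/-- Main abstract cyclic cut lemma. -/
theorem cyclic_cut (n : ℕ) (hn : 1 ≤ n) (M0 : ℕ)
    (h1 : ∀ u c, lo u c ≤ hi u c) (h2 : ∀ u c, lo u c ≤ hi u (c+1) + 1)
    (h3 : ∀ u c, lo u (c+1) ≤ hi u c) (h4 : ∀ c, hi 0 c ≤ M0) :
    (∃ t : ℕ → ℕ, t n = t 0 ∧
      ∀ i < n, lo i (t (i+1)) ≤ t i ∧ t i ≤ hi i (t (i+1))) ∨
    (∃ t : ℕ → ℕ, t n = t 0 ∧
      ∀ i < n, t i + 1 = lo i (t (i+1)) ∧ lo i (t (i+1)) = hi i (t (i+1) + 1) + 1) := by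
  have hHIbound : ∀ j, 1 ≤ j → ∀ c, HI lo hi j c ≤ M0 := by
    intro j hj
    induction j with
    | zero => omega
    | succ j ih =>
        intro c
        by_cases hj0 : j = 0
        · subst hj0
          show Finset.sup _ _ ≤ M0
          apply Finset.sup_le
          intro b hb
          simp only [Finset.mem_Icc] at hb
          have := h4 c
          simp only [HI, id]
          omega
        · show Finset.sup _ _ ≤ M0
          apply Finset.sup_le
          intro b _
          exact ih (by omega) b
  by_cases hex : ∃ c, c ≤ M0 ∧ LO lo hi n c ≤ c ∧ c ≤ HI lo hi n c
  · obtain ⟨c, _, hl, hh⟩ := hex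
    obtain ⟨t, ht0, htn, htp⟩ := reach_of_mem h1 h2 h3 n c c hl hh
    exact Or.inl ⟨t, by omega, htp⟩
  · push_neg at hex
    -- above at 0
    have habove0 : 0 < LO lo hi n 0 := by
      rcases Nat.eq_zero_or_pos (LO lo hi n 0) with h0 | h0
      · have := hex 0 (Nat.zero_le _) (by omega)
        omega
      · exact h0
    have hbelowM : ¬ (M0 < LO lo hi n M0) := by
      have := LO_le_HI h1 (lo := lo) (hi := hi) n M0
      have := hHIbound n hn M0
      omega
    obtain ⟨k, _, hk2, hk3, hk4⟩ :=
      exists_cross (P := fun c => c < LO lo hi n c) (Nat.zero_le M0) habove0 hbelowM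
    -- k < LO n k, ¬(k+1 < LO n (k+1)); also k+1 ∉ fiber
    have hHIk1 : HI lo hi n (k+1) < k + 1 := by
      push_neg at hk4
      exact hex (k+1) (by omega) hk4
    have htch := (touching h1 h2 h3 n k).1
    have htight : LO lo hi n k = HI lo hi n (k+1) + 1 := by omega
    obtain ⟨t, htn, hp, ht0⟩ := (cert_of_tight h1 h2 h3 n k).1 htight
    exact Or.inr ⟨t, by omega, hp⟩



lemma support_getElem {β : Type} {G : SimpleGraph β} {a b : β} (p : G.Walk a b) :
    ∀ (i : ℕ) (h : i < p.support.length), p.support[i] = p.getVert i := by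
  induction p with
  | nil =>
      intro i h
      simp only [SimpleGraph.Walk.support_nil, List.length_singleton] at h
      have : i = 0 := by omega
      subst this
      simp [SimpleGraph.Walk.getVert_zero]
  | cons hadj q ih =>
      intro i h
      cases i with
      | zero => simp [SimpleGraph.Walk.support_cons, SimpleGraph.Walk.getVert_zero]
      | succ i =>
          simp only [SimpleGraph.Walk.support_cons] at h ⊢
          rw [List.getElem_cons_succ]
          rw [ih i (by simpa using h)]
          rfl

section Scheme

variable {n : ℕ} [NeZero n] {β : Type} {G : SimpleGraph β} {f : Fin n ↪ β}

noncomputable local instance decEqInst : DecidableEq β := Classical.decEq β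

variable (hn : 3 ≤ n)

-- basic Fin n facts
lemma fin_one_ne_zero (hn : 3 ≤ n) : (1 : Fin n) ≠ 0 := by
  intro h
  have := congrArg Fin.val h
  simp [Fin.val_one', Nat.mod_eq_of_lt (by omega : 1 < n)] at this

open Fin.NatCast in
lemma fin_two_ne_zero (hn : 3 ≤ n) : (2 : Fin n) ≠ 0 := by
  intro h
  have := congrArg Fin.val h
  have h2 : ((2 : Fin n) : ℕ) = 2 % n := by
    have : (2 : Fin n) = ((2 : ℕ) : Fin n) := by norm_cast
    rw [this, Fin.val_natCast]
  rw [h2, Nat.mod_eq_of_lt (by omega : 2 < n)] at this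
  simp at this

lemma hadj (hn : 3 ≤ n) (u : Fin n) : (SimpleGraph.cycleGraph n).Adj u (u + 1) := by
  rw [SimpleGraph.cycleGraph_adj']
  right
  rw [add_sub_cancel_left]
  simp [Fin.val_one', Nat.mod_eq_of_lt (by omega : 1 < n)]

variable (S : HScheme (SimpleGraph.cycleGraph n) G f)

/-- The scheme path along the cycle edge `u, u+1`. -/
noncomputable def R (hn : 3 ≤ n) (u : Fin n) : G.Walk (f u) (f (u + 1)) :=
  S.path u (u + 1) (hadj hn u)

/-- Position of a vertex along the `u`-th path. -/
noncomputable def pos (hn : 3 ≤ n) (u : Fin n) (w : β) : ℕ :=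
  (R S hn u).support.idxOf w

variable {S}

section basics

variable (hn : 3 ≤ n)

lemma R_isPath (u : Fin n) : (R S hn u).IsPath := S.path_isPath _ _ _

lemma pos_lt_support (u : Fin n) {w : β} (hw : w ∈ (R S hn u).support) :
    pos S hn u w < (R S hn u).support.length :=
  List.idxOf_lt_length_iff.mpr hw

lemma pos_le (u : Fin n) {w : β} (hw : w ∈ (R S hn u).support) :
    pos S hn u w ≤ (R S hn u).length := by
  have := pos_lt_support hn u hw
  rw [SimpleGraph.Walk.length_support] at this
  omega

lemma getVert_pos (u : Fin n) {w : β} (hw : w ∈ (R S hn u).support) :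
    (R S hn u).getVert (pos S hn u w) = w := by
  have h1 : pos S hn u w < (R S hn u).support.length := pos_lt_support hn u hw
  have := support_getElem (R S hn u) (pos S hn u w) h1
  rw [← this]
  exact List.getElem_idxOf h1

lemma pos_getVert (u : Fin n) {i : ℕ} (hi : i ≤ (R S hn u).length) :
    pos S hn u ((R S hn u).getVert i) = i := by
  set w := (R S hn u).getVert i with hw
  have hmem : w ∈ (R S hn u).support :=
    SimpleGraph.Walk.mem_support_iff_exists_getVert.mpr ⟨i, rfl, hi⟩
  have h1 : pos S hn u w < (R S hn u).support.length := pos_lt_support hn u hmem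
  have h2 : i < (R S hn u).support.length := by
    rw [SimpleGraph.Walk.length_support]; omega
  have e1 : (R S hn u).support[pos S hn u w] = w := List.getElem_idxOf h1
  have e2 : (R S hn u).support[i] = w := support_getElem _ i h2
  have hnd : (R S hn u).support.Nodup := (R_isPath hn u).support_nodup
  have : pos S hn u w = i := by
    have := List.Nodup.getElem_inj_iff hnd (hi := h1) (hj := h2)
    exact this.mp (by rw [e1, e2])
  exact this

lemma pos_inj (u : Fin n) {w w' : β} (hw : w ∈ (R S hn u).support)
    (hw' : w' ∈ (R S hn u).support) (h : pos S hn u w = pos S hn u w') : w = w' := by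
  rw [← getVert_pos hn u hw, ← getVert_pos hn u hw', h]

lemma mem_getVert (u : Fin n) {i : ℕ} (hi : i ≤ (R S hn u).length) :
    (R S hn u).getVert i ∈ (R S hn u).support :=
  SimpleGraph.Walk.mem_support_iff_exists_getVert.mpr ⟨i, rfl, hi⟩

lemma pos_start (u : Fin n) : pos S hn u (f u) = 0 := by
  have := pos_getVert (S := S) hn u (i := 0) (Nat.zero_le _)
  rwa [SimpleGraph.Walk.getVert_zero] at this

lemma pos_endpt (u : Fin n) : pos S hn u (f (u + 1)) = (R S hn u).length := by
  have := pos_getVert (S := S) hn u (i := (R S hn u).length) le_rfl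
  rwa [SimpleGraph.Walk.getVert_length] at this

lemma length_pos (u : Fin n) : 0 < (R S hn u).length := by
  rcases Nat.eq_zero_or_pos (R S hn u).length with h | h
  · exfalso
    have : f u = f (u + 1) := by
      have := SimpleGraph.Walk.getVert_length (R S hn u)
      rw [h] at this
      rw [← this, SimpleGraph.Walk.getVert_zero]
    have h2 : u = u + 1 := f.injective this
    exact fin_one_ne_zero hn (left_eq_add.mp h2)
  · exact h

lemma two_paths {u v : Fin n} {w : β} (hu : w ∈ (R S hn u).support)
    (hv : w ∈ (R S hn v).support) : u = v ∨ v = u + 1 ∨ u = v + 1 := by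
  obtain ⟨z, hz⟩ := S.common_endpoint w ⟨u, u+1, hadj hn u, hu⟩
  have h1 := hz u (u+1) (hadj hn u) hu
  have h2 := hz v (v+1) (hadj hn v) hv
  rcases h1 with h1 | h1 <;> rcases h2 with h2 | h2
  · exact Or.inl (h1 ▸ h2 ▸ rfl)
  · exact Or.inr (Or.inr (h1 ▸ h2 ▸ rfl))
  · exact Or.inr (Or.inl (h2 ▸ h1 ▸ rfl))
  · left
    have : u + 1 = v + 1 := h1 ▸ h2 ▸ rfl
    exact add_right_cancel this

open Fin.CommRing in
lemma three_paths {u : Fin n} {w : β} (h0 : w ∈ (R S hn u).support)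
    (h1 : w ∈ (R S hn (u+1)).support) (h2 : w ∈ (R S hn (u+2)).support) : False := by
  have hone := fin_one_ne_zero hn
  have htwo := fin_two_ne_zero hn
  obtain ⟨z, hz⟩ := S.common_endpoint w ⟨u, u+1, hadj hn u, h0⟩
  have g0 := hz u (u+1) (hadj hn u) h0
  have g1 := hz (u+1) (u+1+1) (hadj hn (u+1)) h1
  have g2 := hz (u+2) (u+2+1) (hadj hn (u+2)) h2
  rcases g0 with g0 | g0
  · rcases g1 with g1 | g1
    · exact hone (by linear_combination -(g0.symm.trans g1))
    · exact htwo (by linear_combination -(g0.symm.trans g1))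
  · rcases g2 with g2 | g2
    · exact hone (by linear_combination -(g0.symm.trans g2))
    · exact htwo (by linear_combination -(g0.symm.trans g2))

end basics

section cuts

variable (S)
variable (hn : 3 ≤ n)

/-- Candidate positions on path `u` of vertices shared with path `u+1` whose
position on path `u+1` is at most `c`. -/
noncomputable def Xc (u : Fin n) (c : ℕ) : Finset ℕ :=
  ((R S hn u).support.toFinset.filter
    (fun w => w ∈ (R S hn (u+1)).support ∧ pos S hn (u+1) w ≤ c)).image (pos S hn u)

lemma mem_Xc_iff {u : Fin n} {c a : ℕ} :
    a ∈ Xc S hn u c ↔ ∃ w, w ∈ (R S hn u).support ∧ w ∈ (R S hn (u+1)).support ∧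
      pos S hn (u+1) w ≤ c ∧ pos S hn u w = a := by
  unfold Xc
  simp only [Finset.mem_image, Finset.mem_filter, List.mem_toFinset]
  constructor
  · rintro ⟨w, ⟨hw1, hw2, hw3⟩, hw4⟩
    exact ⟨w, hw1, hw2, hw3, hw4⟩
  · rintro ⟨w, hw1, hw2, hw3, hw4⟩
    exact ⟨w, ⟨hw1, hw2, hw3⟩, hw4⟩

lemma Xc_nonempty (u : Fin n) (c : ℕ) : (Xc S hn u c).Nonempty := by
  refine ⟨pos S hn u (f (u+1)), ?_⟩
  rw [mem_Xc_iff]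
  refine ⟨f (u+1), SimpleGraph.Walk.end_mem_support _, SimpleGraph.Walk.start_mem_support _, ?_, rfl⟩
  rw [pos_start hn (u+1)]
  omega

/-- Upper cut bound. -/
noncomputable def hiG (u : Fin n) (c : ℕ) : ℕ :=
  (Xc S hn u c).min' (Xc_nonempty S hn u c) - 1

open Fin.CommRing in
lemma Xc_min_pos (u : Fin n) (c : ℕ) {a : ℕ} (ha : a ∈ Xc S hn u c) : 1 ≤ a := by
  rw [mem_Xc_iff] at ha
  obtain ⟨w, hw1, hw2, _, hw4⟩ := ha
  rcases Nat.eq_zero_or_pos a with h0 | h; swap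
  · exact h
  exfalso
  have hwfu : w = f u := by
    apply pos_inj hn u hw1 (SimpleGraph.Walk.start_mem_support _)
    rw [hw4, h0, pos_start hn u]
  rw [hwfu] at hw2
  have := S.root_mem (u+1) (u+1+1) (hadj hn (u+1)) u hw2
  have hone := fin_one_ne_zero hn
  have htwo := fin_two_ne_zero hn
  rcases this with h | h
  · exact hone (by linear_combination -h)
  · exact htwo (by linear_combination -h)

lemma hiG_add_one (u : Fin n) (c : ℕ) :
    hiG S hn u c + 1 = (Xc S hn u c).min' (Xc_nonempty S hn u c) := by
  have := Xc_min_pos S hn u c ((Xc S hn u c).min'_mem (Xc_nonempty S hn u c))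
  unfold hiG
  omega

lemma hiG_lt_of_mem (u : Fin n) (c : ℕ) {w : β} (hw1 : w ∈ (R S hn u).support)
    (hw2 : w ∈ (R S hn (u+1)).support) (hw3 : pos S hn (u+1) w ≤ c) :
    hiG S hn u c < pos S hn u w := by
  have hmem : pos S hn u w ∈ Xc S hn u c := (mem_Xc_iff S hn).mpr ⟨w, hw1, hw2, hw3, rfl⟩
  have := (Xc S hn u c).min'_le _ hmem
  have := hiG_add_one S hn u c
  omega

lemma hiG_le_len (u : Fin n) (c : ℕ) : hiG S hn u c + 1 ≤ (R S hn u).length := by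
  have hmem : pos S hn u (f (u+1)) ∈ Xc S hn u c := by
    rw [mem_Xc_iff]
    exact ⟨f (u+1), SimpleGraph.Walk.end_mem_support _,
      SimpleGraph.Walk.start_mem_support _, by rw [pos_start hn (u+1)]; omega, rfl⟩
  have h1 := (Xc S hn u c).min'_le _ hmem
  have h2 := hiG_add_one S hn u c
  have e := pos_endpt (S := S) hn u
  omega

lemma hiG_anti (u : Fin n) {c c' : ℕ} (h : c ≤ c') : hiG S hn u c' ≤ hiG S hn u c := by
  have h1 : (Xc S hn u c).min' (Xc_nonempty S hn u c) ∈ Xc S hn u c' := by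
    have := (Xc S hn u c).min'_mem (Xc_nonempty S hn u c)
    rw [mem_Xc_iff] at this ⊢
    obtain ⟨w, w1, w2, w3, w4⟩ := this
    exact ⟨w, w1, w2, by omega, w4⟩
  have := (Xc S hn u c').min'_le _ h1
  unfold hiG
  omega

/-- Lower cut bound (corner-aware). -/
noncomputable def loG (u : Fin n) (c : ℕ) : ℕ :=
  if h : ∃ w, w ∈ (R S hn u).support ∧ w ∈ (R S hn (u+1)).support ∧
      pos S hn (u+1) w = c + 1 ∧ pos S hn u w ≤ hiG S hn u c
  then pos S hn u h.choose else hiG S hn u c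

lemma loG_le_hiG (u : Fin n) (c : ℕ) : loG S hn u c ≤ hiG S hn u c := by
  unfold loG
  split
  · next h => exact h.choose_spec.2.2.2
  · exact le_rfl

/-- In the no-corner case `hiG` does not jump. -/
lemma hiG_no_jump (u : Fin n) (c : ℕ)
    (h : ¬ ∃ w, w ∈ (R S hn u).support ∧ w ∈ (R S hn (u+1)).support ∧
      pos S hn (u+1) w = c + 1 ∧ pos S hn u w ≤ hiG S hn u c) :
    hiG S hn u c ≤ hiG S hn u (c+1) := by
  by_contra hcon
  push_neg at hcon
  -- the minimizer of `Xc (c+1)` is a corner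
  have hmem := (Xc S hn u (c+1)).min'_mem (Xc_nonempty S hn u (c+1))
  rw [mem_Xc_iff] at hmem
  obtain ⟨w, w1, w2, w3, w4⟩ := hmem
  have hc1 : pos S hn (u+1) w = c + 1 := by
    by_contra hne
    have hle : pos S hn (u+1) w ≤ c := by omega
    have := hiG_lt_of_mem S hn u c w1 w2 hle
    have h2 := hiG_add_one S hn u (c+1)
    omega
  have hle : pos S hn u w ≤ hiG S hn u c := by
    have h2 := hiG_add_one S hn u (c+1)
    omega
  exact h ⟨w, w1, w2, hc1, hle⟩

/-- In the corner case, `loG` equals the jump target exactly. -/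
lemma loG_corner (u : Fin n) (c : ℕ)
    (h : ∃ w, w ∈ (R S hn u).support ∧ w ∈ (R S hn (u+1)).support ∧
      pos S hn (u+1) w = c + 1 ∧ pos S hn u w ≤ hiG S hn u c) :
    loG S hn u c = hiG S hn u (c+1) + 1 := by
  obtain ⟨hw1, hw2, hw3, hw4⟩ := h.choose_spec
  set w := h.choose
  have hlo : loG S hn u c = pos S hn u w := by unfold loG; rw [dif_pos h]
  -- `pos u w` is the minimum of `Xc (c+1)`
  have hmem : pos S hn u w ∈ Xc S hn u (c+1) :=
    (mem_Xc_iff S hn).mpr ⟨w, hw1, hw2, by omega, rfl⟩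
  have hub := (Xc S hn u (c+1)).min'_le _ hmem
  have hlb : (Xc S hn u (c+1)).min' (Xc_nonempty S hn u (c+1)) ∈ Xc S hn u (c+1) :=
    (Xc S hn u (c+1)).min'_mem _
  rw [mem_Xc_iff] at hlb
  obtain ⟨w', w'1, w'2, w'3, w'4⟩ := hlb
  have hge : pos S hn u w ≤ pos S hn u w' := by
    rcases Nat.lt_or_ge c (pos S hn (u+1) w') with hgt | hle'
    · -- pos (u+1) w' = c+1, so w' = w
      have : pos S hn (u+1) w' = c + 1 := by omega
      have hww' : w = w' := pos_inj hn (u+1) hw2 w'2 (by omega)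
      rw [hww']
    · have := hiG_lt_of_mem S hn u c w'1 w'2 hle'
      omega
  have h2 := hiG_add_one S hn u (c+1)
  omega

lemma loG_le_hiG_succ (u : Fin n) (c : ℕ) : loG S hn u c ≤ hiG S hn u (c+1) + 1 := by
  by_cases h : ∃ w, w ∈ (R S hn u).support ∧ w ∈ (R S hn (u+1)).support ∧
      pos S hn (u+1) w = c + 1 ∧ pos S hn u w ≤ hiG S hn u c
  · rw [loG_corner S hn u c h]
  · have h1 : loG S hn u c = hiG S hn u c := by unfold loG; rw [dif_neg h]
    have := hiG_no_jump S hn u c h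
    omega

lemma loG_succ_le_hiG (u : Fin n) (c : ℕ) : loG S hn u (c+1) ≤ hiG S hn u c := by
  have h1 := loG_le_hiG S hn u (c+1)
  have h2 := hiG_anti S hn u (by omega : c ≤ c + 1)
  omega

lemma tight_corner (u : Fin n) (c : ℕ) (ht : loG S hn u c = hiG S hn u (c+1) + 1) :
    ∃ w, w ∈ (R S hn u).support ∧ w ∈ (R S hn (u+1)).support ∧
      pos S hn (u+1) w = c + 1 ∧ pos S hn u w = loG S hn u c := by
  by_cases h : ∃ w, w ∈ (R S hn u).support ∧ w ∈ (R S hn (u+1)).support ∧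
      pos S hn (u+1) w = c + 1 ∧ pos S hn u w ≤ hiG S hn u c
  · obtain ⟨w1, w2, w3, _⟩ := h.choose_spec
    refine ⟨h.choose, w1, w2, w3, ?_⟩
    unfold loG
    rw [dif_pos h]
  · exfalso
    have h1 : loG S hn u c = hiG S hn u c := by unfold loG; rw [dif_neg h]
    have := hiG_no_jump S hn u c h
    omega

lemma witF (u : Fin n) (c : ℕ) :
    ∃ w, w ∈ (R S hn u).support ∧ w ∈ (R S hn (u+1)).support ∧
      pos S hn (u+1) w ≤ c ∧ pos S hn u w = hiG S hn u c + 1 := by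
  have hmem := (Xc S hn u c).min'_mem (Xc_nonempty S hn u c)
  rw [mem_Xc_iff] at hmem
  obtain ⟨w, w1, w2, w3, w4⟩ := hmem
  have := hiG_add_one S hn u c
  exact ⟨w, w1, w2, w3, by omega⟩

/-- The prefix of the `u`-th path up to position `k`, as a walk. -/
lemma prefix_spec (u : Fin n) {k : ℕ} (hk : k ≤ (R S hn u).length) :
    ∃ (x : β) (hx : x ∈ (R S hn u).support),
      ∀ w, w ∈ ((R S hn u).takeUntil x hx).support ↔
        (w ∈ (R S hn u).support ∧ pos S hn u w ≤ k) := by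
  set p := R S hn u with hp
  set x := p.getVert k with hx0
  have hx : x ∈ p.support := mem_getVert hn u hk
  refine ⟨x, hx, ?_⟩
  set W := p.takeUntil x hx with hW
  have hspec : W.append (p.dropUntil x hx) = p := p.take_spec hx
  have hsup : p.support = W.support ++ (p.dropUntil x hx).support.tail := by
    conv_lhs => rw [← hspec]
    exact SimpleGraph.Walk.support_append _ _
  have hnd : p.support.Nodup := (R_isPath hn u).support_nodup
  -- length of W is k
  have hWlen : W.length = k := by
    have h1 : W.length ≤ p.length := p.length_takeUntil_le hx
    have h2 : p.getVert W.length = x := by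
      conv_lhs => rw [← hspec]
      rw [SimpleGraph.Walk.getVert_append]
      simp only [lt_self_iff_false, if_false, Nat.sub_self, SimpleGraph.Walk.getVert_zero]
    have := pos_getVert (S := S) hn u (i := W.length) h1
    rw [h2] at this
    have h3 := pos_getVert (S := S) hn u (i := k) hk
    rw [← hx0] at h3
    omega
  intro w
  constructor
  · intro hw
    have hwp : w ∈ p.support := by rw [hsup]; exact List.mem_append_left _ hw
    have hpos : pos S hn u w = List.idxOf w W.support := by
      show List.idxOf w p.support = _
      rw [hsup]
      exact List.idxOf_append_of_mem hw
    have hlt : List.idxOf w W.support < W.support.length := List.idxOf_lt_length_iff.mpr hw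
    rw [SimpleGraph.Walk.length_support, hWlen] at hlt
    exact ⟨hwp, by omega⟩
  · rintro ⟨hwp, hwk⟩
    by_contra hnw
    have hw2 : w ∈ (p.dropUntil x hx).support.tail := by
      rw [hsup] at hwp
      rcases List.mem_append.mp hwp with h | h
      · exact absurd h hnw
      · exact h
    have hpos : pos S hn u w = W.support.length + List.idxOf w ((p.dropUntil x hx).support.tail) := by
      show List.idxOf w p.support = _
      rw [hsup]
      exact List.idxOf_append_of_notMem hnw
    rw [SimpleGraph.Walk.length_support, hWlen] at hpos
    omega

lemma loG_ne_corner (u : Fin n) (c : ℕ) (h : loG S hn u c ≠ hiG S hn u c) :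
    ∃ w, w ∈ (R S hn u).support ∧ w ∈ (R S hn (u+1)).support ∧
      pos S hn (u+1) w = c + 1 ∧ pos S hn u w = loG S hn u c := by
  by_cases hd : ∃ w, w ∈ (R S hn u).support ∧ w ∈ (R S hn (u+1)).support ∧
      pos S hn (u+1) w = c + 1 ∧ pos S hn u w ≤ hiG S hn u c
  · obtain ⟨w1, w2, w3, _⟩ := hd.choose_spec
    refine ⟨hd.choose, w1, w2, w3, ?_⟩
    unfold loG
    rw [dif_pos hd]
  · exfalso
    apply h
    unfold loG
    rw [dif_neg hd]

lemma prefix_connected (u : Fin n) {k : ℕ} (hk : k ≤ (R S hn u).length) :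
    (G.induce {w | w ∈ (R S hn u).support ∧ pos S hn u w ≤ k}).Connected := by
  obtain ⟨x, hx, hiff⟩ := prefix_spec S hn u hk
  have hconn := ((R S hn u).takeUntil x hx).toSubgraph_connected
  have hset : ((R S hn u).takeUntil x hx).toSubgraph.verts
      = {w | w ∈ (R S hn u).support ∧ pos S hn u w ≤ k} := by
    rw [SimpleGraph.Walk.verts_toSubgraph]
    ext w
    exact hiff w
  have := hconn.induce_verts
  rwa [hset] at this

end cuts

end Scheme

end CycCut

open Fin.NatCast Fin.CommRing in
/-- For every `n ≥ 3`, the cycle `C_n` is rooted-contractible. -/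
theorem cycles_rooted_contractible (n : ℕ) (hn : 3 ≤ n) :
    IsRootedContractible (SimpleGraph.cycleGraph n) := by
  intro β _ G f hne
  obtain ⟨S⟩ := hne
  haveI : NeZero n := ⟨by omega⟩
  classical
  set loN : ℕ → ℕ → ℕ := fun i c => CycCut.loG S hn (i : Fin n) c with hloN
  set hiN : ℕ → ℕ → ℕ := fun i c => CycCut.hiG S hn (i : Fin n) c with hhiN
  have h1 : ∀ u c, loN u c ≤ hiN u c := fun u c => CycCut.loG_le_hiG S hn _ c
  have h2 : ∀ u c, loN u c ≤ hiN u (c+1) + 1 := fun u c => CycCut.loG_le_hiG_succ S hn _ c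
  have h3 : ∀ u c, loN u (c+1) ≤ hiN u c := fun u c => CycCut.loG_succ_le_hiG S hn _ c
  have hcast0 : ((0 : ℕ) : Fin n) = 0 := Nat.cast_zero
  have h4 : ∀ c, hiN 0 c ≤ (CycCut.R S hn 0).length - 1 := by
    intro c
    have hle := CycCut.hiG_le_len S hn (0 : Fin n) c
    simp only [hhiN, hcast0]
    omega
  rcases CycCut.cyclic_cut n (by omega) _ h1 h2 h3 h4 with ⟨t, htn, ht⟩ | ⟨t, htn, ht⟩
  · -- in-fiber chain: build the rooted minor from prefix branch sets
    set T : Fin n → ℕ := fun u => t u.val with hT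
    have tnext : ∀ u : Fin n, T (u + 1) = t (u.val + 1) := by
      intro u
      rcases Nat.lt_or_ge (u.val + 1) n with hlt | hge
      · have : (u + 1).val = u.val + 1 := by
          rw [Fin.add_def]
          simp only [Fin.val_one', Nat.mod_eq_of_lt (by omega : 1 < n)]
          exact Nat.mod_eq_of_lt hlt
        simp only [hT, this]
      · have hv : u.val + 1 = n := by have := u.isLt; omega
        have : (u + 1).val = 0 := by
          rw [Fin.add_def]
          simp only [Fin.val_one', Nat.mod_eq_of_lt (by omega : 1 < n)]
          rw [hv, Nat.mod_self]
        simp only [hT, this, hv]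
        omega
    have hKey : ∀ u : Fin n, CycCut.loG S hn u (T (u+1)) ≤ T u ∧
        T u ≤ CycCut.hiG S hn u (T (u+1)) := by
      intro u
      have := ht u.val u.isLt
      simp only [hloN, hhiN, Fin.cast_val_eq_self] at this
      rw [tnext u]
      exact this
    have hTlen : ∀ u : Fin n, T u + 1 ≤ (CycCut.R S hn u).length := by
      intro u
      have := (hKey u).2
      have := CycCut.hiG_le_len S hn u (T (u+1))
      omega
    set C : Fin n → Set β :=
      fun u => {w | w ∈ (CycCut.R S hn u).support ∧ CycCut.pos S hn u w ≤ T u} with hC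
    have serv : ∀ u : Fin n, ∃ x ∈ C u, ∃ y ∈ C (u+1), G.Adj x y := by
      intro u
      by_cases hcase : T u = CycCut.hiG S hn u (T (u+1))
      · obtain ⟨w, w1, w2, w3, w4⟩ := CycCut.witF S hn u (T (u+1))
        refine ⟨(CycCut.R S hn u).getVert (T u), ?_, w, ⟨w2, w3⟩, ?_⟩
        · exact ⟨CycCut.mem_getVert hn u (by have := hTlen u; omega),
            by rw [CycCut.pos_getVert hn u (by have := hTlen u; omega)]⟩
        · have hadj := (CycCut.R S hn u).adj_getVert_succ
            (i := T u) (by have := hTlen u; omega)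
          have : (CycCut.R S hn u).getVert (T u + 1) = w := by
            have := CycCut.getVert_pos hn u w1
            rw [w4, ← hcase] at this
            exact this
          rwa [this] at hadj
      · have hne : CycCut.loG S hn u (T (u+1)) ≠ CycCut.hiG S hn u (T (u+1)) := by
          have := (hKey u).1
          have := (hKey u).2
          intro h
          exact hcase (by omega)
        obtain ⟨w, w1, w2, w3, w4⟩ := CycCut.loG_ne_corner S hn u (T (u+1)) hne
        refine ⟨w, ⟨w1, by rw [w4]; exact (hKey u).1⟩,
          (CycCut.R S hn (u+1)).getVert (T (u+1)), ?_, ?_⟩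
        · exact ⟨CycCut.mem_getVert hn (u+1) (by have := hTlen (u+1); omega),
            by rw [CycCut.pos_getVert hn (u+1) (by have := hTlen (u+1); omega)]⟩
        · have hadj := (CycCut.R S hn (u+1)).adj_getVert_succ
            (i := T (u+1)) (by have := hTlen (u+1); omega)
          have : (CycCut.R S hn (u+1)).getVert (T (u+1) + 1) = w := by
            have := CycCut.getVert_pos hn (u+1) w2
            rw [w3] at this
            exact this
          rw [this] at hadj
          exact hadj.symm
    refine ⟨C, ?_, ?_, ?_, ?_⟩
    · intro u
      exact ⟨(CycCut.R S hn u).start_mem_support,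
        by rw [CycCut.pos_start hn u]; omega⟩
    · intro u
      exact CycCut.prefix_connected S hn u (k := T u) (by have := hTlen u; omega)
    · intro u v huv
      rw [Set.disjoint_left]
      rintro w ⟨hwu, hwuk⟩ ⟨hwv, hwvk⟩
      rcases CycCut.two_paths hn hwu hwv with h | h | h
      · exact huv h
      · subst h
        have := CycCut.hiG_lt_of_mem S hn u (T (u+1)) hwu hwv hwvk
        have := (hKey u).2
        omega
      · subst h
        have := CycCut.hiG_lt_of_mem S hn v (T (v+1)) hwv hwu hwuk
        have := (hKey v).2
        omega
    · intro a b hab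
      rw [SimpleGraph.cycleGraph_adj'] at hab
      have hone : ((1 : Fin n) : ℕ) = 1 := by
        simp [Fin.val_one', Nat.mod_eq_of_lt (by omega : 1 < n)]
      rcases hab with h | h
      · -- a - b = 1, i.e. a = b + 1
        have hab' : a = b + 1 := by
          have : a - b = 1 := Fin.val_injective (by rw [h, hone])
          rw [sub_eq_iff_eq_add] at this
          rw [this, add_comm]
        obtain ⟨x, hx, y, hy, hxy⟩ := serv b
        rw [← hab'] at hy
        exact ⟨y, hy, x, hx, hxy.symm⟩
      · have hab' : b = a + 1 := by
          have : b - a = 1 := Fin.val_injective (by rw [h, hone])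
          rw [sub_eq_iff_eq_add] at this
          rw [this, add_comm]
        obtain ⟨x, hx, y, hy, hxy⟩ := serv a
        rw [← hab'] at hy
        exact ⟨x, hx, y, hy, hxy⟩
  · -- tight chain: impossible
    exfalso
    have h0 := ht 0 (by omega)
    have h1' := ht 1 (by omega)
    simp only [hloN, hhiN, Nat.cast_zero, Nat.cast_one] at h0 h1'
    obtain ⟨w₀, a1, a2, a3, _⟩ := CycCut.tight_corner S hn 0 (t 1) h0.2
    obtain ⟨w₁, b1, b2, b3, b4⟩ := CycCut.tight_corner S hn 1 (t 2) h1'.2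
    have hzo : (0 : Fin n) + 1 = 1 := zero_add 1
    have hweq : w₀ = w₁ := by
      apply CycCut.pos_inj hn (1 : Fin n) (by rwa [hzo] at a2) b1
      rw [b4, ← h1'.1]
      rw [← hzo]
      exact a3
    apply CycCut.three_paths hn (u := (0 : Fin n)) a1 a2
    rw [hweq]
    have : (0 : Fin n) + 2 = 1 + 1 := by ring
    rw [this]
    exact b2
end

section
/- Forests are rooted-contractible: every forest H is rooted-contractible, i.e., every graph G that contains an H-scheme contains H as a rooted minor. -/
open SimpleGraph

namespace ForestRC
open SimpleGraph.Walk


variable {β : Type} {G : SimpleGraph β} {s : Set β}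

lemma reachable_induce_of_walk {a b : β} (w : G.Walk a b) (hw : ∀ z ∈ w.support, z ∈ s) :
    (G.induce s).Reachable ⟨a, hw a w.start_mem_support⟩ ⟨b, hw b w.end_mem_support⟩ := by
  induction w with
  | nil => rfl
  | @cons a m b h p ih =>
    have hm : m ∈ s := hw m (by simp)
    have hp : ∀ z ∈ p.support, z ∈ s := fun z hz => hw z (by simp [hz])
    have h1 : (G.induce s).Adj ⟨a, hw a (by simp)⟩ ⟨m, hm⟩ := by
      simpa using h
    exact (Adj.reachable h1).trans (ih hp)

lemma connected_induce_of_pivot {x0 : β} (hx0 : x0 ∈ s)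
    (h : ∀ y ∈ s, ∃ w : G.Walk y x0, ∀ z ∈ w.support, z ∈ s) :
    (G.induce s).Connected := by
  rw [connected_iff]
  refine ⟨fun a b => ?_, ⟨⟨x0, hx0⟩⟩⟩
  obtain ⟨wa, hwa⟩ := h a a.2
  obtain ⟨wb, hwb⟩ := h b b.2
  exact (reachable_induce_of_walk wa hwa).trans (reachable_induce_of_walk wb hwb).symm

lemma exists_walk_in_down : ∀ {p q : ↥s} (_ : (G.induce s).Walk p q),
    ∃ w' : G.Walk p.1 q.1, ∀ z ∈ w'.support, z ∈ s := by
  intro p q w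
  induction w with
  | nil => exact ⟨Walk.nil, by intro z hz; simp at hz; subst hz; exact Subtype.prop _⟩
  | @cons a m b h w ih =>
    obtain ⟨w', hw'⟩ := ih
    refine ⟨Walk.cons (by simpa using h) w', ?_⟩
    intro z hz
    simp only [support_cons, List.mem_cons] at hz
    rcases hz with rfl | hz
    · exact a.2
    · exact hw' z hz

lemma exists_walk_in_of_induce_connected (hconn : (G.induce s).Connected) {a b : β}
    (ha : a ∈ s) (hb : b ∈ s) : ∃ w : G.Walk a b, ∀ z ∈ w.support, z ∈ s := by
  obtain ⟨w⟩ := hconn ⟨a, ha⟩ ⟨b, hb⟩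
  exact exists_walk_in_down w

lemma end_mem_support_tail {a b : β} (w : G.Walk a b) (h : a ≠ b) : b ∈ w.support.tail := by
  cases w with
  | nil => exact absurd rfl h
  | cons h p => simpa using p.end_mem_support

lemma two_le_length_of_internal {a b x : β} (w : G.Walk a b) (hx : x ∈ w.support)
    (hxa : x ≠ a) (hxb : x ≠ b) : 2 ≤ w.length := by
  cases w with
  | nil => simp at hx; exact absurd hx hxa
  | cons h p =>
    cases p with
    | nil => simp at hx; rcases hx with rfl | rfl <;> simp_all
    | cons h' q => simp only [length_cons]; omega

lemma isPath_concat {a b c : β} {q : G.Walk a b} (hq : q.IsPath) (hc : c ∉ q.support)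
    (h : G.Adj b c) : (q.concat h).IsPath := by
  rw [← isPath_reverse_iff, reverse_concat]
  rw [cons_isPath_iff]
  exact ⟨hq.reverse, by simpa [support_reverse] using hc⟩

lemma getVert_one_ne_end {a b : β} {p : G.Walk a b} (hp : p.IsPath) (hl : 2 ≤ p.length) :
    p.getVert 1 ≠ b := by
  cases p with
  | nil => simp at hl
  | @cons a m b h q =>
    cases q with
    | nil => simp at hl
    | @cons m m' b h' r =>
      -- getVert 1 = m
      intro hcontra
      simp only [getVert_cons_succ, getVert_zero] at hcontra
      subst hcontra
      have := hp.support_nodup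
      simp at this

lemma adj_getVert_one' {a b : β} {p : G.Walk a b} (hl : 1 ≤ p.length) :
    G.Adj a (p.getVert 1) := by
  have h2 := p.adj_getVert_succ (i := 0) (by omega)
  rwa [getVert_zero] at h2



variable {β : Type} {G : SimpleGraph β}

/-- Contraction of `x` into `r`: edges at `x` are moved to `r`, and `x` is isolated. -/
def CG (G : SimpleGraph β) (r x : β) : SimpleGraph β where
  Adj a b := a ≠ b ∧ ((G.Adj a b ∧ a ≠ x ∧ b ≠ x) ∨ (a = r ∧ G.Adj x b) ∨ (b = r ∧ G.Adj a x))
  symm := ⟨by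
    rintro a b ⟨hne, (⟨h1, h2, h3⟩ | ⟨h1, h2⟩ | ⟨h1, h2⟩)⟩
    · exact ⟨hne.symm, Or.inl ⟨h1.symm, h3, h2⟩⟩
    · exact ⟨hne.symm, Or.inr (Or.inr ⟨h1, h2.symm⟩)⟩
    · exact ⟨hne.symm, Or.inr (Or.inl ⟨h1, h2.symm⟩)⟩⟩
  loopless := ⟨fun a h => h.1 rfl⟩

lemma cg_isolated {r x : β} (hrx : r ≠ x) {y : β} : ¬ (CG G r x).Adj x y := by
  rintro ⟨hne, (⟨_, h2, _⟩ | ⟨h1, _⟩ | ⟨_, h2⟩)⟩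
  · exact h2 rfl
  · exact hrx h1.symm
  · exact h2.ne rfl

lemma edges_mem_cg {r x a b : β} {w : G.Walk a b} (hx : x ∉ w.support) :
    ∀ e ∈ w.edges, e ∈ (CG G r x).edgeSet := by
  intro e he
  induction e with
  | h c d =>
    have hadj : G.Adj c d := w.edges_subset_edgeSet he
    have hc : c ∈ w.support := w.fst_mem_support_of_mem_edges he
    have hd : d ∈ w.support := w.snd_mem_support_of_mem_edges he
    exact ⟨hadj.ne, Or.inl ⟨hadj, fun hh => hx (hh ▸ hc), fun hh => hx (hh ▸ hd)⟩⟩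

lemma mem_take_not_tail_drop [DecidableEq β] {a b x' : β} {p : G.Walk a b} (hp : p.IsPath)
    (hx : x' ∈ p.support) {z : β} (hz : z ∈ (p.takeUntil x' hx).support) :
    z ∉ (p.dropUntil x' hx).support.tail := by
  have hnodup := hp.support_nodup
  rw [← p.take_spec hx, support_append] at hnodup
  exact fun hz2 => (List.disjoint_of_nodup_append hnodup) hz hz2

lemma start_not_mem_drop [DecidableEq β] {a b x' : β} {p : G.Walk a b} (hp : p.IsPath)
    (hx : x' ∈ p.support) (hne : a ≠ x') : a ∉ (p.dropUntil x' hx).support := by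
  intro hmem
  rw [(p.dropUntil x' hx).support_eq_cons, List.mem_cons] at hmem
  rcases hmem with hmem2 | hmem2
  · exact hne hmem2
  · exact mem_take_not_tail_drop hp hx (p.takeUntil x' hx).start_mem_support hmem2


lemma getVert_mem_support' {a b : β} (p : G.Walk a b) (i : ℕ) : p.getVert i ∈ p.support := by
  rcases le_or_gt i p.length with h | h
  · exact mem_support_iff_exists_getVert.mpr ⟨i, rfl, h⟩
  · rw [p.getVert_of_length_le h.le]; exact p.end_mem_support

lemma length_dropUntil_lt [DecidableEq β] {a b x' : β} {p : G.Walk a b}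
    (hx : x' ∈ p.support) (hne : a ≠ x') : (p.dropUntil x' hx).length < p.length := by
  have hspec := congrArg Walk.length (p.take_spec hx)
  rw [length_append] at hspec
  have h1 : ¬ (p.takeUntil x' hx).length = 0 := fun h0 =>
    hne (Walk.eq_of_length_eq_zero h0)
  omega

section NewScheme

variable {α : Type} {H : SimpleGraph α} {f : α ↪ β} [DecidableEq β] [DecidableEq α]

/-- The rerouted walk for an edge `u b` whose old path passes through `x`:
`f u` followed by the part of the old path strictly after `x`. -/
noncomputable def NauxW (S : HScheme H G f) (u b : α) (h : H.Adj u b) (x : β)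
    (hx : x ∈ (S.path u b h).support) (hxroot : ∀ w : α, f w ≠ x) :
    (CG G (f u) x).Walk (f u) (f b) :=
  let D := (S.path u b h).dropUntil x hx
  have hDnil : ¬ D.Nil := Walk.not_nil_of_ne (fun e => hxroot b e.symm)
  have hDpath : D.IsPath := (S.path_isPath u b h).dropUntil hx
  have hxtail : x ∉ D.tail.support := by
    have h2 := hDpath
    rw [← D.cons_tail_eq hDnil, cons_isPath_iff] at h2
    exact h2.2
  have hfu : f u ∉ D.support :=
    start_not_mem_drop (S.path_isPath u b h) hx (hxroot u)
  have hne1 : f u ≠ D.getVert 1 := fun e => hfu (e ▸ getVert_mem_support' D 1)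
  Walk.cons (show (CG G (f u) x).Adj (f u) (D.getVert 1) from
      ⟨hne1, Or.inr (Or.inl ⟨rfl, D.adj_snd hDnil⟩)⟩)
    (D.tail.transfer (CG G (f u) x) (edges_mem_cg hxtail))

lemma NauxW_support (S : HScheme H G f) (u b : α) (h : H.Adj u b) (x : β)
    (hx : x ∈ (S.path u b h).support) (hxroot : ∀ w : α, f w ≠ x) :
    (NauxW S u b h x hx hxroot).support
      = f u :: ((S.path u b h).dropUntil x hx).support.tail := by
  unfold NauxW
  simp only [support_cons, support_transfer]
  congr 1
  have hDnil : ¬ ((S.path u b h).dropUntil x hx).Nil :=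
    Walk.not_nil_of_ne (fun e => hxroot b e.symm)
  conv_rhs => rw [← ((S.path u b h).dropUntil x hx).cons_tail_eq hDnil]
  simp [support_cons]

lemma NauxW_isPath (S : HScheme H G f) (u b : α) (h : H.Adj u b) (x : β)
    (hx : x ∈ (S.path u b h).support) (hxroot : ∀ w : α, f w ≠ x) :
    (NauxW S u b h x hx hxroot).IsPath := by
  have hDnil : ¬ ((S.path u b h).dropUntil x hx).Nil :=
    Walk.not_nil_of_ne (fun e => hxroot b e.symm)
  have hDpath : ((S.path u b h).dropUntil x hx).IsPath := (S.path_isPath u b h).dropUntil hx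
  have htail : ((S.path u b h).dropUntil x hx).tail.IsPath := by
    have h2 := hDpath
    rw [← ((S.path u b h).dropUntil x hx).cons_tail_eq hDnil, cons_isPath_iff] at h2
    exact h2.1
  have hfu : f u ∉ ((S.path u b h).dropUntil x hx).support :=
    start_not_mem_drop (S.path_isPath u b h) hx (hxroot u)
  unfold NauxW
  rw [cons_isPath_iff]
  refine ⟨htail.transfer _, ?_⟩
  rw [support_transfer]
  intro hmem
  apply hfu
  have hsub : ((S.path u b h).dropUntil x hx).tail.support
      ⊆ ((S.path u b h).dropUntil x hx).support := by
    conv_rhs => rw [← ((S.path u b h).dropUntil x hx).cons_tail_eq hDnil]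
    rw [support_cons]
    exact List.subset_cons_self _ _
  exact hsub hmem

lemma NauxW_length (S : HScheme H G f) (u b : α) (h : H.Adj u b) (x : β)
    (hx : x ∈ (S.path u b h).support) (hxroot : ∀ w : α, f w ≠ x) :
    (NauxW S u b h x hx hxroot).length = ((S.path u b h).dropUntil x hx).length := by
  have hDnil : ¬ ((S.path u b h).dropUntil x hx).Nil :=
    Walk.not_nil_of_ne (fun e => hxroot b e.symm)
  unfold NauxW
  simp only [length_cons, length_transfer]
  exact length_tail_add_one hDnil

lemma transfer_congr {G' : SimpleGraph β} {a b : β} {p q : G.Walk a b} (hpq : p = q)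
    (hp : ∀ e ∈ p.edges, e ∈ G'.edgeSet) :
    p.transfer G' hp = q.transfer G' (hpq ▸ hp) := by subst hpq; rfl

variable (S : HScheme H G f) (u : α) (x : β)
    (hxroot : ∀ w : α, f w ≠ x)
    (hgood : ∀ a b (h' : H.Adj a b), x ∈ (S.path a b h').support → u = a ∨ u = b)

/-- The new scheme paths after contracting `x` into `f u`. -/
noncomputable def newPath (a b : α) (h : H.Adj a b) : (CG G (f u) x).Walk (f a) (f b) :=
  if hx : x ∈ (S.path a b h).support then
    if ha : a = u then
      (NauxW S u b (ha ▸ h) x (by subst ha; exact hx) hxroot).copy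
        (congrArg f ha).symm rfl
    else
      ((NauxW S u a ((((hgood a b h hx).resolve_left (fun e => ha e.symm)).symm) ▸ h.symm) x
          (by have hb : b = u := ((hgood a b h hx).resolve_left (fun e => ha e.symm)).symm
              subst hb; rw [S.path_symm]; simpa [support_reverse] using hx) hxroot).copy
        (congrArg f (((hgood a b h hx).resolve_left (fun e => ha e.symm)).symm)).symm
        rfl).reverse
  else
    (S.path a b h).transfer (CG G (f u) x) (edges_mem_cg hx)

lemma newPath_symm (a b : α) (h : H.Adj a b) :
    newPath S u x hxroot hgood b a h.symm = (newPath S u x hxroot hgood a b h).reverse := by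
  have hmemiff : x ∈ (S.path b a h.symm).support ↔ x ∈ (S.path a b h).support := by
    rw [S.path_symm a b h, support_reverse, List.mem_reverse]
  unfold newPath
  by_cases hx : x ∈ (S.path a b h).support
  · have hx' : x ∈ (S.path b a h.symm).support := hmemiff.mpr hx
    rw [dif_pos hx, dif_pos hx']
    by_cases ha : a = u
    · have hb : ¬ b = u := fun hb => h.ne (ha.trans hb.symm)
      rw [dif_pos ha, dif_neg hb]
    · have hb : b = u := ((hgood a b h hx).resolve_left (fun e => ha e.symm)).symm
      rw [dif_pos hb, dif_neg ha, reverse_reverse]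
  · have hx' : ¬ x ∈ (S.path b a h.symm).support := fun hh => hx (hmemiff.mp hh)
    rw [dif_neg hx, dif_neg hx']
    rw [Walk.reverse_transfer]
    exact transfer_congr (S.path_symm a b h) _

lemma newPath_isPath (a b : α) (h : H.Adj a b) :
    (newPath S u x hxroot hgood a b h).IsPath := by
  unfold newPath
  by_cases hx : x ∈ (S.path a b h).support
  · rw [dif_pos hx]
    by_cases ha : a = u
    · rw [dif_pos ha, isPath_copy]
      exact NauxW_isPath S u b _ x _ hxroot
    · rw [dif_neg ha, isPath_reverse_iff, isPath_copy]
      exact NauxW_isPath S u a _ x _ hxroot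
  · rw [dif_neg hx]
    exact (S.path_isPath a b h).transfer _

lemma tail_drop_subset (a b : α) (h : H.Adj a b) (hx : x ∈ (S.path a b h).support) :
    ((S.path a b h).dropUntil x hx).support.tail ⊆ (S.path a b h).support :=
  fun z hz => support_dropUntil_subset _ hx (List.tail_subset _ hz)

lemma newPath_root_mem (a b : α) (h : H.Adj a b) (w : α) :
    f w ∈ (newPath S u x hxroot hgood a b h).support → w = a ∨ w = b := by
  unfold newPath
  by_cases hx : x ∈ (S.path a b h).support
  · rw [dif_pos hx]
    by_cases ha : a = u
    · rw [dif_pos ha, support_copy, NauxW_support]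
      intro hmem
      rcases List.mem_cons.mp hmem with he | hmem2
      · exact Or.inl (ha ▸ f.injective he)
      · rcases S.root_mem u b _ w (tail_drop_subset S x u b _ _ hmem2) with h1 | h1
        · exact Or.inl (ha ▸ h1)
        · exact Or.inr h1
    · have hb : b = u := ((hgood a b h hx).resolve_left (fun e => ha e.symm)).symm
      rw [dif_neg ha, support_reverse, List.mem_reverse, support_copy, NauxW_support]
      intro hmem
      rcases List.mem_cons.mp hmem with he | hmem2
      · exact Or.inr (hb ▸ f.injective he)
      · rcases S.root_mem u a _ w (tail_drop_subset S x u a _ _ hmem2) with h1 | h1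
        · exact Or.inr (hb ▸ h1)
        · exact Or.inl h1
  · rw [dif_neg hx, support_transfer]
    exact S.root_mem a b h w

lemma newPath_mem_old (a b : α) (h : H.Adj a b) (y : β)
    (hy : y ∈ (newPath S u x hxroot hgood a b h).support) (hyu : y ≠ f u) :
    y ∈ (S.path a b h).support := by
  revert hy
  unfold newPath
  by_cases hx : x ∈ (S.path a b h).support
  · rw [dif_pos hx]
    by_cases ha : a = u
    · rw [dif_pos ha, support_copy, NauxW_support]
      intro hmem
      rcases List.mem_cons.mp hmem with he | hmem2
      · exact absurd he hyu
      · have h2 := tail_drop_subset S x u b _ _ hmem2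
        subst ha; exact h2
    · have hb : b = u := ((hgood a b h hx).resolve_left (fun e => ha e.symm)).symm
      rw [dif_neg ha, support_reverse, List.mem_reverse, support_copy, NauxW_support]
      intro hmem
      rcases List.mem_cons.mp hmem with he | hmem2
      · exact absurd he hyu
      · have h2 := tail_drop_subset S x u a _ _ hmem2
        subst hb
        rw [S.path_symm, support_reverse, List.mem_reverse] at h2
        exact h2
  · rw [dif_neg hx, support_transfer]
    exact id

lemma newPath_length_le (a b : α) (h : H.Adj a b) :
    (newPath S u x hxroot hgood a b h).length ≤ (S.path a b h).length := by
  unfold newPath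
  by_cases hx : x ∈ (S.path a b h).support
  · rw [dif_pos hx]
    by_cases ha : a = u
    · rw [dif_pos ha, length_copy, NauxW_length]
      have := length_dropUntil_lt (p := S.path u b (ha ▸ h)) (by subst ha; exact hx) (hxroot u)
      subst ha; omega
    · have hb : b = u := ((hgood a b h hx).resolve_left (fun e => ha e.symm)).symm
      rw [dif_neg ha, length_reverse, length_copy, NauxW_length]
      have hx' : x ∈ (S.path u a (hb ▸ h.symm)).support := by
        subst hb; rw [S.path_symm]; simpa [support_reverse] using hx
      have hlt := length_dropUntil_lt hx' (hxroot u)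
      have hlen2 : (S.path u a (hb ▸ h.symm)).length = (S.path a b h).length := by
        subst hb; rw [S.path_symm, length_reverse]
      omega
  · rw [dif_neg hx, length_transfer]

lemma newPath_length_lt (a b : α) (h : H.Adj a b) (hx : x ∈ (S.path a b h).support) :
    (newPath S u x hxroot hgood a b h).length < (S.path a b h).length := by
  unfold newPath
  rw [dif_pos hx]
  by_cases ha : a = u
  · rw [dif_pos ha, length_copy, NauxW_length]
    have := length_dropUntil_lt (p := S.path u b (ha ▸ h)) (by subst ha; exact hx) (hxroot u)
    subst ha; omega
  · have hb : b = u := ((hgood a b h hx).resolve_left (fun e => ha e.symm)).symm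
    rw [dif_neg ha, length_reverse, length_copy, NauxW_length]
    have hx' : x ∈ (S.path u a (hb ▸ h.symm)).support := by
      subst hb; rw [S.path_symm]; simpa [support_reverse] using hx
    have hlt := length_dropUntil_lt hx' (hxroot u)
    have hlen2 : (S.path u a (hb ▸ h.symm)).length = (S.path a b h).length := by
      subst hb; rw [S.path_symm, length_reverse]
    omega

/-- The contracted scheme. -/
noncomputable def newScheme : HScheme H (CG G (f u) x) f where
  path := newPath S u x hxroot hgood
  path_symm := newPath_symm S u x hxroot hgood
  path_isPath := newPath_isPath S u x hxroot hgood
  root_mem := newPath_root_mem S u x hxroot hgood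
  common_endpoint := by
    intro y hy
    obtain ⟨a0, b0, h0, hy0⟩ := hy
    by_cases hyu : y = f u
    · subst hyu
      exact ⟨u, fun a b h hmem => newPath_root_mem S u x hxroot hgood a b h u hmem⟩
    · obtain ⟨z, hz⟩ := S.common_endpoint y
        ⟨a0, b0, h0, newPath_mem_old S u x hxroot hgood a0 b0 h0 y hy0 hyu⟩
      exact ⟨z, fun a b h hmem =>
        hz a b h (newPath_mem_old S u x hxroot hgood a b h y hmem hyu)⟩

end NewScheme

section Psi

variable {α : Type} [Fintype α] {H : SimpleGraph α} {f : α ↪ β} (S : HScheme H G f)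

lemma getVert_one_not_root {u v : α} (h : H.Adj u v) (hl : 2 ≤ (S.path u v h).length)
    (w : α) : f w ≠ (S.path u v h).getVert 1 := by
  intro he
  have hmem : (S.path u v h).getVert 1 ∈ (S.path u v h).support :=
    getVert_mem_support' _ 1
  rcases S.root_mem u v h w (he ▸ hmem) with h1 | h1
  · rw [h1] at he; exact (adj_getVert_one' (by omega)).ne he
  · rw [h1] at he; exact getVert_one_ne_end (S.path_isPath u v h) hl he.symm

lemma psi_step
    (hbad : ∀ u v (h : H.Adj u v), 2 ≤ (S.path u v h).length →
      ∃ a, ∃ b, ∃ h' : H.Adj a b,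
        (S.path u v h).getVert 1 ∈ (S.path a b h').support ∧ u ≠ a ∧ u ≠ b)
    {u v : α} (h : H.Adj u v) (hl : 2 ≤ (S.path u v h).length) :
    ∃ t, ∃ ht : H.Adj v t, t ≠ u ∧ 2 ≤ (S.path v t ht).length := by
  obtain ⟨a, b, h', hxmem, hua, hub⟩ := hbad u v h hl
  have hxself : (S.path u v h).getVert 1 ∈ (S.path u v h).support := getVert_mem_support' _ 1
  have hxroot : ∀ w : α, f w ≠ (S.path u v h).getVert 1 := getVert_one_not_root S h hl
  obtain ⟨z, hz⟩ := S.common_endpoint _ ⟨u, v, h, hxself⟩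
  have hz1 := hz u v h hxself
  have hz2 := hz a b h' hxmem
  have hzv : z = v := by
    rcases hz1 with rfl | rfl
    · rcases hz2 with rfl | rfl
      · exact absurd rfl hua
      · exact absurd rfl hub
    · rfl
  subst hzv
  rcases hz2 with rfl | rfl
  · exact ⟨b, h', Ne.symm hub, two_le_length_of_internal _ hxmem
      (fun hh => hxroot z hh.symm) (fun hh => hxroot b hh.symm)⟩
  · refine ⟨a, h'.symm, Ne.symm hua, ?_⟩
    have hmem2 : (S.path u z h).getVert 1 ∈ (S.path z a h'.symm).support := by
      rw [S.path_symm a z h']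
      simpa [support_reverse] using hxmem
    exact two_le_length_of_internal _ hmem2
      (fun hh => hxroot z hh.symm) (fun hh => hxroot a hh.symm)

lemma psi_iter (hH : H.IsAcyclic)
    (hbad : ∀ u v (h : H.Adj u v), 2 ≤ (S.path u v h).length →
      ∃ a, ∃ b, ∃ h' : H.Adj a b,
        (S.path u v h).getVert 1 ∈ (S.path a b h').support ∧ u ≠ a ∧ u ≠ b)
    (hlong : ∃ u v, ∃ h : H.Adj u v, 2 ≤ (S.path u v h).length) (n : ℕ) :
    ∃ (a b c : α), ∃ hbc : H.Adj b c, ∃ p : H.Walk a b,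
      (p.concat hbc).IsPath ∧ n ≤ p.length ∧ 2 ≤ (S.path b c hbc).length := by
  classical
  induction n with
  | zero =>
    obtain ⟨u, v, h, hl⟩ := hlong
    exact ⟨u, u, v, h, Walk.nil, by
      rw [concat_nil]
      simp [cons_isPath_iff, h.ne, h.ne'], Nat.zero_le _, hl⟩
  | succ n ih =>
    obtain ⟨a, b, c, hbc, p, hpath, hlen, hlong'⟩ := ih
    obtain ⟨t, ht, htb, hlt⟩ := psi_step S hbad hbc hlong'
    have htc : t ≠ c := ht.ne'
    have hts : t ∉ (p.concat hbc).support := by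
      intro hmem
      have hq : ((p.concat hbc).takeUntil t hmem).IsPath := hpath.takeUntil hmem
      have hcnot : c ∉ ((p.concat hbc).takeUntil t hmem).support := by
        intro hc
        have hnodup := hpath.support_nodup
        rw [← (p.concat hbc).take_spec hmem, support_append] at hnodup
        exact (List.disjoint_of_nodup_append hnodup) hc
          (end_mem_support_tail _ htc)
      have hq2 : (((p.concat hbc).takeUntil t hmem).concat ht.symm).IsPath :=
        isPath_concat hq hcnot ht.symm
      have hequal : p.concat hbc = ((p.concat hbc).takeUntil t hmem).concat ht.symm := by
        have h2 := hH.path_unique ⟨p.concat hbc, hpath⟩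
          ⟨((p.concat hbc).takeUntil t hmem).concat ht.symm, hq2⟩
        exact congrArg Subtype.val h2
      obtain ⟨hv, -⟩ := concat_inj hequal
      exact htb hv.symm
    exact ⟨a, c, t, ht, p.concat hbc, isPath_concat hpath hts ht,
      by rw [length_concat]; omega, hlt⟩

lemma exists_good (hH : H.IsAcyclic)
    (hlong : ∃ u v, ∃ h : H.Adj u v, 2 ≤ (S.path u v h).length) :
    ∃ u v, ∃ h : H.Adj u v, 2 ≤ (S.path u v h).length ∧
      ∀ a b (h' : H.Adj a b),
        (S.path u v h).getVert 1 ∈ (S.path a b h').support → u = a ∨ u = b := by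
  by_contra hcon
  push_neg at hcon
  have hbad : ∀ u v (h : H.Adj u v), 2 ≤ (S.path u v h).length →
      ∃ a, ∃ b, ∃ h' : H.Adj a b,
        (S.path u v h).getVert 1 ∈ (S.path a b h').support ∧ u ≠ a ∧ u ≠ b := by
    intro u v h hl
    obtain ⟨a, b, h', hmem, hne⟩ := hcon u v h hl
    exact ⟨a, b, h', hmem, hne.1, hne.2⟩
  obtain ⟨a, b, c, hbc, p, hpath, hlen, -⟩ :=
    psi_iter S hH hbad hlong (Fintype.card α)
  have hlt := hpath.length_lt
  rw [length_concat] at hlt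
  omega

end Psi


section Assemble

variable {α : Type} {H : SimpleGraph α} {f : α ↪ β}

open Classical in
noncomputable def schemeMeasure [Fintype α] (S : HScheme H G f) : ℕ :=
  ∑ p : α × α, if h : H.Adj p.1 p.2 then (S.path p.1 p.2 h).length else 0

open Classical in
lemma schemeMeasure_lt [Fintype α] [DecidableEq β] [DecidableEq α] (S : HScheme H G f)
    (u : α) (x : β) (hxroot : ∀ w : α, f w ≠ x)
    (hgood : ∀ a b (h' : H.Adj a b), x ∈ (S.path a b h').support → u = a ∨ u = b)
    {v : α} (huv : H.Adj u v) (hxmem : x ∈ (S.path u v huv).support) :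
    schemeMeasure (newScheme S u x hxroot hgood) < schemeMeasure S := by
  unfold schemeMeasure
  apply Finset.sum_lt_sum
  · intro p _
    by_cases h : H.Adj p.1 p.2
    · rw [dif_pos h, dif_pos h]
      exact newPath_length_le S u x hxroot hgood p.1 p.2 h
    · rw [dif_neg h, dif_neg h]
  · refine ⟨(u, v), Finset.mem_univ _, ?_⟩
    rw [dif_pos huv, dif_pos huv]
    exact newPath_length_lt S u x hxroot hgood u v huv hxmem

lemma cg_walk_clean {r x : β} {s : Set β} (hr : ∀ z ∈ s, z ≠ r) (hx : ∀ z ∈ s, z ≠ x) :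
    ∀ {a b : β} (w : (CG G r x).Walk a b), (∀ z ∈ w.support, z ∈ s) →
      ∃ w' : G.Walk a b, ∀ z ∈ w'.support, z ∈ s := by
  intro a b w
  induction w with
  | nil => intro h; exact ⟨Walk.nil, h⟩
  | @cons a m b hadj p ih =>
    intro hs
    obtain ⟨w', hw'⟩ := ih (fun z hz => hs z (by simp [hz]))
    have has : a ∈ s := hs a (by simp)
    have hms : m ∈ s := hs m (by simp)
    obtain ⟨hne, hcl⟩ := hadj
    rcases hcl with ⟨h1, -, -⟩ | ⟨h1, -⟩ | ⟨h1, -⟩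
    · refine ⟨Walk.cons h1 w', ?_⟩
      intro z hz
      rcases List.mem_cons.mp hz with rfl | hz2
      · exact has
      · exact hw' z hz2
    · exact absurd h1 (hr a has)
    · exact absurd h1 (hr m hms)

lemma cg_walk_u {r x : β} (hadjx : G.Adj r x) {s : Set β} :
    ∀ {a b : β} (w : (CG G r x).Walk a b), (∀ z ∈ w.support, z ∈ s) →
      ∃ w' : G.Walk a b, ∀ z ∈ w'.support, z ∈ s ∪ {x} := by
  intro a b w
  induction w with
  | nil => intro h; exact ⟨Walk.nil, fun z hz => Or.inl (h z hz)⟩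
  | @cons a m b hadj p ih =>
    intro hs
    obtain ⟨w', hw'⟩ := ih (fun z hz => hs z (by simp [hz]))
    have has : a ∈ s := hs a (by simp)
    have hms : m ∈ s := hs m (by simp)
    obtain ⟨hne, hcl⟩ := hadj
    rcases hcl with ⟨h1, -, -⟩ | ⟨h1, h2⟩ | ⟨h1, h2⟩
    · refine ⟨Walk.cons h1 w', ?_⟩
      intro z hz
      rcases List.mem_cons.mp hz with rfl | hz2
      · exact Or.inl has
      · exact hw' z hz2
    · subst h1
      refine ⟨Walk.cons hadjx (Walk.cons h2 w'), ?_⟩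
      intro z hz
      rcases List.mem_cons.mp hz with rfl | hz2
      · exact Or.inl has
      rcases List.mem_cons.mp hz2 with rfl | hz3
      · exact Or.inr rfl
      · exact hw' z hz3
    · subst h1
      refine ⟨Walk.cons h2 (Walk.cons hadjx.symm w'), ?_⟩
      intro z hz
      rcases List.mem_cons.mp hz with rfl | hz2
      · exact Or.inl has
      rcases List.mem_cons.mp hz2 with rfl | hz3
      · exact Or.inr rfl
      · exact hw' z hz3

lemma lift_rooted {u : α} {x : β} (hadjx : G.Adj (f u) x) (hxroot : ∀ w : α, f w ≠ x) :
    RootedMinor H (CG G (f u) x) f → RootedMinor H G f := by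
  classical
  rintro ⟨C', hroot, hconn, hdisj, hcontact⟩
  have hxfu : f u ≠ x := hxroot u
  have hxnot : ∀ w : α, x ∉ C' w := by
    intro w hxw
    obtain ⟨wk, hwk⟩ := exists_walk_in_of_induce_connected (hconn w) hxw (hroot w)
    obtain ⟨y, hadj, p, -⟩ :=
      wk.exists_eq_cons_of_ne (fun e => hxroot w e.symm)
    exact cg_isolated hxfu hadj
  have hfu_only : ∀ w : α, w ≠ u → f u ∉ C' w := by
    intro w hw hmem
    exact Set.disjoint_left.mp (hdisj hw) hmem (hroot u)
  refine ⟨fun w => if w = u then C' u ∪ {x} else C' w, ?_, ?_, ?_, ?_⟩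
  · intro w
    beta_reduce
    by_cases hw : w = u
    · rw [if_pos hw, hw]; exact Or.inl (hroot u)
    · rw [if_neg hw]; exact hroot w
  · intro w
    beta_reduce
    by_cases hw : w = u
    · rw [if_pos hw]
      apply connected_induce_of_pivot (x0 := f u) (Or.inl (hroot u))
      intro y hy
      rcases hy with hy | hy
      · obtain ⟨wk, hwk⟩ := exists_walk_in_of_induce_connected (hconn u) hy (hroot u)
        exact cg_walk_u hadjx wk hwk
      · rcases hy with rfl
        refine ⟨Walk.cons hadjx.symm Walk.nil, ?_⟩
        intro z hz
        rcases List.mem_cons.mp hz with rfl | hz2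
        · exact Or.inr rfl
        · simp at hz2
          subst hz2
          exact Or.inl (hroot u)
    · rw [if_neg hw]
      apply connected_induce_of_pivot (x0 := f w) (hroot w)
      intro y hy
      obtain ⟨wk, hwk⟩ := exists_walk_in_of_induce_connected (hconn w) hy (hroot w)
      exact cg_walk_clean (fun z hz e => hfu_only w hw (by rwa [e] at hz))
        (fun z hz e => hxnot w (by rwa [e] at hz)) wk hwk
  · intro w1 w2 hne
    beta_reduce
    by_cases h1 : w1 = u <;> by_cases h2 : w2 = u
    · exact absurd (h1.trans h2.symm) hne
    · rw [if_pos h1, if_neg h2, Set.disjoint_union_left]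
      exact ⟨h1 ▸ hdisj hne, Set.disjoint_singleton_left.mpr (hxnot w2)⟩
    · rw [if_pos h2, if_neg h1, Set.disjoint_union_right]
      exact ⟨h2 ▸ hdisj hne, Set.disjoint_singleton_right.mpr (hxnot w1)⟩
    · rw [if_neg h1, if_neg h2]
      exact hdisj hne
  · intro a b hab
    beta_reduce
    obtain ⟨p, hp, q, hq, hpq⟩ := hcontact a b hab
    have hCsub : ∀ w : α, C' w ⊆ (if w = u then C' u ∪ {x} else C' w) := by
      intro w z hz
      by_cases hw : w = u
      · rw [if_pos hw]
        rw [hw] at hz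
        exact Or.inl hz
      · rw [if_neg hw]
        exact hz
    obtain ⟨hne, hcl⟩ := hpq
    rcases hcl with ⟨h1, -, -⟩ | ⟨h1, h2⟩ | ⟨h1, h2⟩
    · exact ⟨p, hCsub a hp, q, hCsub b hq, h1⟩
    · -- p = f u, G.Adj x q  : then a = u and x ∈ C a
      have ha : a = u := by
        by_contra hcon
        exact hfu_only a hcon (h1 ▸ hp)
      exact ⟨x, by rw [if_pos ha]; simp, q, hCsub b hq, h2⟩
    · have hb : b = u := by
        by_contra hcon
        exact hfu_only b hcon (h1 ▸ hq)
      exact ⟨p, hCsub a hp, x, by rw [if_pos hb]; simp, h2⟩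

lemma adj_of_length_one {a b : β} {p : G.Walk a b} (h : p.length = 1) : G.Adj a b := by
  cases p with
  | nil => simp at h
  | cons hadj q =>
    cases q with
    | nil => exact hadj
    | cons h1 q1 => simp [length_cons] at h

lemma base_case (S : HScheme H G f)
    (hshort : ∀ a b (h : H.Adj a b), (S.path a b h).length ≤ 1) : RootedMinor H G f := by
  refine ⟨fun w => {f w}, fun w => rfl, ?_, ?_, ?_⟩
  · intro w
    beta_reduce
    apply connected_induce_of_pivot (s := {f w}) (x0 := f w) rfl
    intro y hy
    rcases hy with rfl
    exact ⟨Walk.nil, by simp⟩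
  · intro w1 w2 hne
    simp only [Set.disjoint_singleton_left, Set.mem_singleton_iff]
    exact fun e => hne (f.injective e)
  · intro a b hab
    have h0 : (S.path a b hab).length ≠ 0 := fun h0 =>
      hab.ne (f.injective (Walk.eq_of_length_eq_zero h0))
    have h1 : (S.path a b hab).length = 1 := by
      have := hshort a b hab; omega
    exact ⟨f a, rfl, f b, rfl, adj_of_length_one h1⟩

lemma main_induction [Fintype α] (hH : H.IsAcyclic) (f : α ↪ β) :
    ∀ (n : ℕ) (G : SimpleGraph β) (S : HScheme H G f), schemeMeasure S ≤ n →
      RootedMinor H G f := by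
  classical
  intro n
  induction n with
  | zero =>
    intro G S hms
    apply base_case S
    intro a b h
    have hterm : (if h' : H.Adj a b then (S.path a b h').length else 0)
        ≤ schemeMeasure S := by
      unfold schemeMeasure
      exact Finset.single_le_sum (f := fun p : α × α =>
        if h' : H.Adj p.1 p.2 then (S.path p.1 p.2 h').length else 0)
        (fun p _ => Nat.zero_le _) (Finset.mem_univ (a, b))
    rw [dif_pos h] at hterm
    omega
  | succ n IH =>
    intro G S hms
    by_cases hlong : ∃ a b, ∃ h : H.Adj a b, 2 ≤ (S.path a b h).length
    · obtain ⟨u, v, huv, hl, hgood⟩ := exists_good S hH hlong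
      have hadjx : G.Adj (f u) ((S.path u v huv).getVert 1) := adj_getVert_one' (by omega)
      have hxroot : ∀ w, f w ≠ (S.path u v huv).getVert 1 := getVert_one_not_root S huv hl
      have hxmem : (S.path u v huv).getVert 1 ∈ (S.path u v huv).support :=
        getVert_mem_support' _ 1
      apply lift_rooted hadjx hxroot
      apply IH (CG G (f u) ((S.path u v huv).getVert 1))
        (newScheme S u ((S.path u v huv).getVert 1) hxroot hgood)
      have hlt := schemeMeasure_lt S u ((S.path u v huv).getVert 1) hxroot hgood huv hxmem
      omega
    · push_neg at hlong
      exact base_case S (fun a b h => by have := hlong a b h; omega)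

end Assemble

end ForestRC

/-- Every forest is rooted-contractible. -/
theorem forests_rooted_contractible {α : Type} [Fintype α] (H : SimpleGraph α)
    (hH : H.IsAcyclic) : IsRootedContractible H := by
  intro β _ G f hne
  obtain ⟨S⟩ := hne
  exact ForestRC.main_induction hH f (ForestRC.schemeMeasure S) G S le_rfl
end

section
/- Let H be a triangle-free graph. Then H is M'-contractible if and only if H has a stable set that induces an M'-contraction. -/
open SimpleGraph

/-- The graph `M'(H)`: vertices are `(v, i)` for `v ∈ V(H)` and `i ∈ {1,2}` (here
`false` plays the role of `1` and `true` the role of `2`); `(u,i)` is adjacent to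
`(v,j)` iff `uv ∈ E(H)` and at least one of `i, j` equals `2`. -/
def Mprime {α : Type} (H : SimpleGraph α) : SimpleGraph (α × Bool) where
  Adj x y := H.Adj x.1 y.1 ∧ (x.2 = true ∨ y.2 = true)
  symm := by
    constructor
    intro x y h
    exact ⟨h.1.symm, h.2.symm⟩
  loopless := by
    constructor
    intro x h
    exact H.loopless.irrefl x.1 h.1

/-- `H` is M'-contractible: `M'(H)` contains `H` as a rooted minor with each vertex
`v` of `H` rooted at `v₁ = (v, false)`. -/
def MprimeContractible {α : Type} (H : SimpleGraph α) : Prop :=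
  ∃ C : α → Set (α × Bool),
    (∀ v, (v, false) ∈ C v) ∧
    (∀ v, ((Mprime H).induce (C v)).Connected) ∧
    (Pairwise fun u v => Disjoint (C u) (C v)) ∧
    (∀ u v, H.Adj u v → ∃ x ∈ C u, ∃ y ∈ C v, (Mprime H).Adj x y)

/-- The set of neighbors of a set `S` of vertices. -/
def setNeighbors {α : Type} (H : SimpleGraph α) (S : Set α) : Set α :=
  {w | ∃ v ∈ S, H.Adj v w}

/-- `S` is a stable (independent) set in `H`. -/
def IsStableSet {α : Type} (H : SimpleGraph α) (S : Set α) : Prop :=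
  ∀ u ∈ S, ∀ v ∈ S, ¬ H.Adj u v

/-- `H` has a shift automorphism: an automorphism `π` with every vertex `v`
adjacent to `π v`.  (The graph with no vertices trivially has one.) -/
def HasShiftAutomorphism {α : Type} (H : SimpleGraph α) : Prop :=
  ∃ π : α ≃ α, (∀ a b, H.Adj a b → H.Adj (π a) (π b)) ∧ (∀ a, H.Adj a (π a))

/-- The set `S` induces an M'-contraction in `H`: there is a matching among the
edges between `S` and `N(S)` covering every vertex of `N(S)` (encoded by a map `g`
assigning to each `w ∈ N(S)` its partner `g w ∈ S`, injectively), and the induced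
subgraph `H − (S ∪ N(S))` has a shift automorphism. -/
def InducesMprimeContraction {α : Type} (H : SimpleGraph α) (S : Set α) : Prop :=
  (∃ g : α → α, Set.InjOn g (setNeighbors H S) ∧
      ∀ w ∈ setNeighbors H S, g w ∈ S ∧ H.Adj (g w) w) ∧
  HasShiftAutomorphism (H.induce (S ∪ setNeighbors H S)ᶜ)


lemma notri {α : Type} (H : SimpleGraph α) (hH : H.CliqueFree 3) {a b c : α}
    (h1 : H.Adj a b) (h2 : H.Adj a c) (h3 : H.Adj b c) : False := by
  classical
  exact hH {a, b, c} (is3Clique_triple_iff.mpr ⟨h1, h2, h3⟩)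

lemma hub_connected {β : Type} (G : SimpleGraph β) (s : Set β) (h : β) (hh : h ∈ s)
    (hall : ∀ x ∈ s, x = h ∨ G.Adj h x) : (G.induce s).Connected := by
  have key : ∀ u : ↥s, (G.induce s).Reachable ⟨h, hh⟩ u := by
    rintro ⟨x, hx⟩
    rcases hall x hx with rfl | ha
    · exact Reachable.refl _
    · exact SimpleGraph.Adj.reachable (by exact ha)
  rw [SimpleGraph.connected_iff]
  exact ⟨fun u v => (key u).symm.trans (key v), ⟨⟨h, hh⟩⟩⟩

lemma exists_adj_of_connected {β : Type} {G : SimpleGraph β} {s : Set β}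
    (hc : (G.induce s).Connected) {a b : β} (ha : a ∈ s) (hb : b ∈ s) (hab : a ≠ b) :
    ∃ c ∈ s, G.Adj a c := by
  obtain ⟨w⟩ := hc.preconnected ⟨a, ha⟩ ⟨b, hb⟩
  have hnil : ¬ w.Nil := Walk.not_nil_of_ne (by simp [Subtype.ext_iff, hab])
  have hadj := w.adj_snd hnil
  exact ⟨(w.getVert 1).1, (w.getVert 1).2, hadj⟩
lemma mprime_adj {α : Type} (H : SimpleGraph α) (x y : α × Bool) :
    (Mprime H).Adj x y ↔ H.Adj x.1 y.1 ∧ (x.2 = true ∨ y.2 = true) := Iff.rfl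

lemma backward_dir {α : Type} (H : SimpleGraph α)
    (S : Set α) (hS : IsStableSet H S) (hind : InducesMprimeContraction H S) :
    MprimeContractible H := by
  classical
  obtain ⟨⟨g, hginj, hg⟩, hauto⟩ := hind
  have hpx : ∃ p : α → α,
      (∀ v, v ∈ (S ∪ setNeighbors H S)ᶜ → p v ∈ (S ∪ setNeighbors H S)ᶜ) ∧
      (∀ v, v ∈ (S ∪ setNeighbors H S)ᶜ → H.Adj v (p v)) ∧
      (∀ u v, u ∈ (S ∪ setNeighbors H S)ᶜ → v ∈ (S ∪ setNeighbors H S)ᶜ →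
        H.Adj u v → H.Adj (p u) (p v)) ∧
      (∀ u v, u ∈ (S ∪ setNeighbors H S)ᶜ → v ∈ (S ∪ setNeighbors H S)ᶜ →
        p u = p v → u = v) := by
    obtain ⟨π, hπhom, hπshift⟩ := hauto
    refine ⟨fun v => if h : v ∈ (S ∪ setNeighbors H S)ᶜ then (π ⟨v, h⟩).1 else v,
      ?_, ?_, ?_, ?_⟩
    · intro v h; simp only [dif_pos h]; exact (π ⟨v, h⟩).2
    · intro v h; simp only [dif_pos h]; exact hπshift ⟨v, h⟩
    · intro u v hu hv h
      simp only [dif_pos hu, dif_pos hv]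
      exact hπhom ⟨u, hu⟩ ⟨v, hv⟩ (by exact h)
    · intro u v hu hv h
      simp only [dif_pos hu, dif_pos hv] at h
      exact congrArg Subtype.val (π.injective (Subtype.ext h))
  obtain ⟨p, hpT, hpadj, hphom, hpinj⟩ := hpx
  set NN := setNeighbors H S with hNNdef
  set T : Set α := (S ∪ NN)ᶜ with hTdef
  have hSN : ∀ w ∈ NN, w ∉ S := by
    rintro w ⟨v, hv, hadj⟩ hw
    exact hS v hv w hw hadj
  have hTS : ∀ v ∈ T, v ∉ S := fun v hv h => hv (Or.inl h)
  have hTN : ∀ v ∈ T, v ∉ NN := fun v hv h => hv (Or.inr h)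
  have htri : ∀ v : α, v ∈ S ∨ v ∈ NN ∨ v ∈ T := by
    intro v
    by_cases h1 : v ∈ S
    · exact Or.inl h1
    by_cases h2 : v ∈ NN
    · exact Or.inr (Or.inl h2)
    · exact Or.inr (Or.inr (fun h => h.elim h1 h2))
  set C : α → Set (α × Bool) := fun v =>
    if v ∈ S then {(v, false)}
    else if v ∈ NN then {(v, false), (v, true), (g v, true)}
    else {(v, false), (p v, true)} with hCdef
  have hCS : ∀ v, v ∈ S → C v = {(v, false)} := by
    intro v hv; simp only [hCdef]; rw [if_pos hv]
  have hCN : ∀ v, v ∈ NN → C v = {(v, false), (v, true), (g v, true)} := by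
    intro v hv; simp only [hCdef]; rw [if_neg (hSN v hv), if_pos hv]
  have hCT : ∀ v, v ∈ T → C v = {(v, false), (p v, true)} := by
    intro v hv; simp only [hCdef]; rw [if_neg (hTS v hv), if_neg (hTN v hv)]
  have hroot : ∀ v, (v, false) ∈ C v := by
    intro v
    rcases htri v with h | h | h
    · rw [hCS v h]; simp
    · rw [hCN v h]; simp
    · rw [hCT v h]; simp
  have hmem : ∀ v x (b : Bool), (x, b) ∈ C v →
      (b = false ∧ x = v) ∨
      (b = true ∧ v ∈ NN ∧ (x = v ∨ x = g v)) ∨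
      (b = true ∧ v ∈ T ∧ x = p v) := by
    intro v x b hx
    rcases htri v with h | h | h
    · rw [hCS v h] at hx
      simp only [Set.mem_singleton_iff, Prod.mk.injEq] at hx
      exact Or.inl ⟨hx.2, hx.1⟩
    · rw [hCN v h] at hx
      simp only [Set.mem_insert_iff, Set.mem_singleton_iff, Prod.mk.injEq] at hx
      rcases hx with ⟨h1, h2⟩ | ⟨h1, h2⟩ | ⟨h1, h2⟩
      · exact Or.inl ⟨h2, h1⟩
      · exact Or.inr (Or.inl ⟨h2, h, Or.inl h1⟩)
      · exact Or.inr (Or.inl ⟨h2, h, Or.inr h1⟩)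
    · rw [hCT v h] at hx
      simp only [Set.mem_insert_iff, Set.mem_singleton_iff, Prod.mk.injEq] at hx
      rcases hx with ⟨h1, h2⟩ | ⟨h1, h2⟩
      · exact Or.inl ⟨h2, h1⟩
      · exact Or.inr (Or.inr ⟨h2, h, h1⟩)
  refine ⟨C, hroot, ?_, ?_, ?_⟩
  · -- connectivity
    intro v
    rcases htri v with h | h | h
    · rw [hCS v h]
      refine hub_connected _ _ (v, false) (by simp) ?_
      intro x hx; simp only [Set.mem_singleton_iff] at hx; exact Or.inl hx
    · rw [hCN v h]
      refine hub_connected _ _ (g v, true) (by simp) ?_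
      intro x hx
      simp only [Set.mem_insert_iff, Set.mem_singleton_iff] at hx
      rcases hx with rfl | rfl | rfl
      · exact Or.inr ⟨(hg v h).2, Or.inl rfl⟩
      · exact Or.inr ⟨(hg v h).2, Or.inl rfl⟩
      · exact Or.inl rfl
    · rw [hCT v h]
      refine hub_connected _ _ (v, false) (by simp) ?_
      intro x hx
      simp only [Set.mem_insert_iff, Set.mem_singleton_iff] at hx
      rcases hx with rfl | rfl
      · exact Or.inl rfl
      · exact Or.inr ⟨hpadj v h, Or.inr rfl⟩
  · -- disjointness
    intro u v huv
    rw [Set.disjoint_left]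
    rintro ⟨x, b⟩ hxu hxv
    rcases hmem u x b hxu with ⟨hb, hx⟩ | ⟨hb, hu, hx⟩ | ⟨hb, hu, hx⟩ <;>
      rcases hmem v x b hxv with ⟨hb', hx'⟩ | ⟨hb', hv, hx'⟩ | ⟨hb', hv, hx'⟩ <;>
      (try (rw [hb] at hb'; exact Bool.noConfusion hb'))
    · exact huv (hx.symm.trans hx')
    · -- u ∈ NN, v ∈ NN
      rcases hx with h1 | h1 <;> rcases hx' with h2 | h2
      · exact huv (h1.symm.trans h2)
      · exact hSN u hu (by rw [h1.symm.trans h2]; exact (hg v hv).1)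
      · exact hSN v hv (by rw [h2.symm.trans h1]; exact (hg u hu).1)
      · exact huv (hginj hu hv (h1.symm.trans h2))
    · -- u ∈ NN, v ∈ T
      rcases hx with h1 | h1
      · exact hTN u (by rw [h1.symm.trans hx']; exact hpT v hv) hu
      · exact hTS (g u) (by rw [h1.symm.trans hx']; exact hpT v hv) (hg u hu).1
    · -- u ∈ T, v ∈ NN
      rcases hx' with h2 | h2
      · exact hTN v (by rw [h2.symm.trans hx]; exact hpT u hu) hv
      · exact hTS (g v) (by rw [h2.symm.trans hx]; exact hpT u hu) (hg v hv).1
    · -- u ∈ T, v ∈ T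
      exact huv (hpinj u v hu hv (hx.symm.trans hx'))
  · -- edges
    intro u v huv
    rcases htri u with hu | hu | hu
    · have hv : v ∈ NN := ⟨u, hu, huv⟩
      exact ⟨(u, false), hroot u, (v, true), by rw [hCN v hv]; simp, ⟨huv, Or.inr rfl⟩⟩
    · exact ⟨(u, true), by rw [hCN u hu]; simp, (v, false), hroot v, ⟨huv, Or.inl rfl⟩⟩
    · rcases htri v with hv | hv | hv
      · exact absurd (⟨v, hv, huv.symm⟩ : u ∈ NN) (hTN u hu)
      · exact ⟨(u, false), hroot u, (v, true), by rw [hCN v hv]; simp, ⟨huv, Or.inr rfl⟩⟩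
      · exact ⟨(p u, true), by rw [hCT u hu]; simp, (p v, true), by rw [hCT v hv]; simp,
          ⟨hphom u v hu hv huv, Or.inl rfl⟩⟩
lemma forward_dir {α : Type} [Fintype α] (H : SimpleGraph α) (hH : H.CliqueFree 3)
    (hMp : MprimeContractible H) :
    ∃ S : Set α, IsStableSet H S ∧ InducesMprimeContraction H S := by
  classical
  obtain ⟨C, hroot, hconn, hdisj, hedge⟩ := hMp
  set Y : α → Set α := fun v => {x | (x, true) ∈ C v} with hYdef
  have hfalse : ∀ v x, (x, false) ∈ C v → x = v := by
    intro v x hx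
    by_contra hne
    exact Set.disjoint_left.mp (hdisj (fun h : v = x => hne h.symm)) hx (hroot x)
  have hYdisj : ∀ u v x, x ∈ Y u → x ∈ Y v → u = v := by
    intro u v x hu hv
    by_contra h
    exact Set.disjoint_left.mp (hdisj h) hu hv
  set S : Set α := {v | ∀ x, (x, true) ∉ C v} with hSdef
  have hYS : ∀ v ∈ S, ∀ x, x ∉ Y v := fun v hv x hx => hv x hx
  -- edge decomposition
  have hE : ∀ u v, H.Adj u v →
      (∃ y ∈ Y v, H.Adj u y) ∨ (∃ y ∈ Y u, H.Adj y v) ∨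
      (∃ y ∈ Y u, ∃ y' ∈ Y v, H.Adj y y') := by
    intro u v huv
    obtain ⟨⟨x1, b1⟩, hx1, ⟨x2, b2⟩, hx2, hadj⟩ := hedge u v huv
    rw [mprime_adj] at hadj
    obtain ⟨hadj1, hadj2⟩ := hadj
    cases b1 with
    | false =>
      cases b2 with
      | false => simp at hadj2
      | true =>
        rw [hfalse u x1 hx1] at hadj1
        exact Or.inl ⟨x2, hx2, hadj1⟩
    | true =>
      cases b2 with
      | false =>
        rw [hfalse v x2 hx2] at hadj1
        exact Or.inr (Or.inl ⟨x1, hx1, hadj1⟩)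
      | true => exact Or.inr (Or.inr ⟨x1, hx1, x2, hx2, hadj1⟩)
  -- connectivity neighbors
  have hNB : ∀ v x, x ∈ Y v → H.Adj x v ∨ ∃ y ∈ Y v, H.Adj x y := by
    intro v x hx
    obtain ⟨⟨x2, b2⟩, hmem, hadj⟩ :=
      exists_adj_of_connected (hconn v) hx (hroot v) (by simp)
    rw [mprime_adj] at hadj
    cases b2 with
    | false => exact Or.inl ((hfalse v x2 hmem) ▸ hadj.1)
    | true => exact Or.inr ⟨x2, hmem, hadj.1⟩
  have hroot_nbr : ∀ v, v ∉ S → ∃ y ∈ Y v, H.Adj v y := by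
    intro v hv
    have : ∃ x, (x, true) ∈ C v := by
      by_contra h
      push_neg at h
      exact hv h
    obtain ⟨x, hx⟩ := this
    obtain ⟨⟨x2, b2⟩, hmem, hadj⟩ :=
      exists_adj_of_connected (hconn v) (hroot v) hx (by simp)
    rw [mprime_adj] at hadj
    cases b2 with
    | false => simp at hadj
    | true => exact ⟨x2, hmem, hadj.1⟩
  have hstable : IsStableSet H S := by
    intro u hu v hv huv
    rcases hE u v huv with ⟨y, hy, _⟩ | ⟨y, hy, _⟩ | ⟨y, hy, _⟩
    · exact hYS v hv y hy
    · exact hYS u hu y hy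
    · exact hYS u hu y hy
  set NN := setNeighbors H S with hNNdef
  set T : Set α := (S ∪ NN)ᶜ with hTdef
  have hSNN : ∀ w ∈ NN, w ∉ S := by
    rintro w ⟨s, hs, hadj⟩ hw
    exact hstable s hs w hw hadj
  -- tokens for NN vertices
  have tok : ∀ w : ↥NN, ∃ (y : ↥NN) (cc : α), y.1 ∈ Y w.1 ∧ cc ∈ Y w.1 ∧
      H.Adj w.1 cc ∧ y.1 ≠ cc := by
    rintro ⟨w, hw⟩
    obtain ⟨v, hvS, hvw⟩ := hw
    have hw' : w ∉ S := hSNN w ⟨v, hvS, hvw⟩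
    obtain ⟨c, hcY, hwc⟩ := hroot_nbr w hw'
    rcases hE v w hvw with ⟨y, hyY, hvy⟩ | ⟨y, hyY, _⟩ | ⟨y, hyY, _, _, _⟩
    · refine ⟨⟨y, ⟨v, hvS, hvy⟩⟩, c, hyY, hcY, hwc, ?_⟩
      rintro rfl
      exact notri H hH hvw hvy hwc
    · exact absurd hyY (hYS v hvS y)
    · exact absurd hyY (hYS v hvS y)
  choose ytok ctok hytokY hctokY hctokadj hctokne using tok
  have hyinj : Function.Injective ytok := by
    intro w w' h
    have h2 : (ytok w).1 ∈ Y w'.1 := h ▸ hytokY w'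
    exact Subtype.ext (hYdisj w.1 w'.1 (ytok w).1 (hytokY w) h2)
  have hysurj : Function.Surjective ytok := Finite.injective_iff_surjective.mp hyinj
  -- tokens for T vertices
  have atokx : ∀ z : ↥T, ∃ a : ↥T, a.1 ∈ Y z.1 ∧ H.Adj z.1 a.1 := by
    rintro ⟨z, hz⟩
    have hzS : z ∉ S := fun h => hz (Or.inl h)
    obtain ⟨a, haY, hza⟩ := hroot_nbr z hzS
    have haS : a ∉ S := fun h => hz (Or.inr ⟨a, h, hza.symm⟩)
    have haNN : a ∉ NN := by
      intro haN
      obtain ⟨w, hw⟩ := hysurj ⟨a, haN⟩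
      have h2 : a ∈ Y w.1 := by have := hytokY w; rw [hw] at this; exact this
      exact hz (Or.inr ((hYdisj z w.1 a haY h2) ▸ w.2))
    exact ⟨⟨a, fun h => h.elim haS haNN⟩, haY, hza⟩
  choose atok hatokY hatokadj using atokx
  have hainj : Function.Injective atok := by
    intro z z' h
    have h2 : (atok z).1 ∈ Y z'.1 := h ▸ hatokY z'
    exact Subtype.ext (hYdisj z.1 z'.1 (atok z).1 (hatokY z) h2)
  have hasurj : Function.Surjective atok := Finite.injective_iff_surjective.mp hainj
  -- classification of elements of branch sets
  have hclassNN : ∀ x, x ∈ NN → ∀ v, x ∈ Y v → ∃ w : ↥NN, w.1 = v ∧ (ytok w).1 = x := by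
    intro x hx v hv
    obtain ⟨w, hw⟩ := hysurj ⟨x, hx⟩
    have h2 : x ∈ Y w.1 := by have := hytokY w; rw [hw] at this; exact this
    exact ⟨w, (hYdisj v w.1 x hv h2).symm, by rw [hw]⟩
  have hclassT : ∀ x, x ∈ T → ∀ v, x ∈ Y v → ∃ z : ↥T, z.1 = v ∧ (atok z).1 = x := by
    intro x hx v hv
    obtain ⟨z, hz⟩ := hasurj ⟨x, hx⟩
    have h2 : x ∈ Y z.1 := by have := hatokY z; rw [hz] at this; exact this
    exact ⟨z, (hYdisj v z.1 x hv h2).symm, by rw [hz]⟩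
  -- ctok lands in S
  have hctokS : ∀ w : ↥NN, ctok w ∈ S := by
    intro w
    by_contra hcS
    by_cases hcN : ctok w ∈ NN
    · obtain ⟨w', hw'1, hw'2⟩ := hclassNN (ctok w) hcN w.1 (hctokY w)
      have : w' = w := Subtype.ext hw'1
      rw [this] at hw'2
      exact hctokne w hw'2
    · have hcT : ctok w ∈ T := fun h => h.elim hcS hcN
      obtain ⟨z, hz1, hz2⟩ := hclassT (ctok w) hcT w.1 (hctokY w)
      have : w.1 ∈ T := hz1 ▸ z.2
      exact this (Or.inr w.2)
  -- Y z = {atok z} for z in T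
  have hYT : ∀ z : ↥T, ∀ x ∈ Y z.1, x = (atok z).1 := by
    intro z x hx
    by_contra hne
    have hxNN : x ∉ NN := by
      intro hxN
      obtain ⟨w, hw1, _⟩ := hclassNN x hxN z.1 hx
      have : z.1 ∈ NN := hw1 ▸ w.2
      exact z.2 (Or.inr this)
    have hxT : x ∉ T := by
      intro hxT
      obtain ⟨z', hz'1, hz'2⟩ := hclassT x hxT z.1 hx
      have : z' = z := Subtype.ext hz'1
      rw [this] at hz'2
      exact hne hz'2.symm
    have hxS : x ∈ S := by
      by_contra hxS
      exact hxT (fun h => h.elim hxS hxNN)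
    rcases hNB z.1 x hx with hadjxz | ⟨y, hyY, hxy⟩
    · exact z.2 (Or.inr ⟨x, hxS, hadjxz⟩)
    · -- classify y
      have hyNN : y ∉ NN := by
        intro hyN
        obtain ⟨w, hw1, _⟩ := hclassNN y hyN z.1 hyY
        exact z.2 (Or.inr (hw1 ▸ w.2))
      by_cases hyT : y ∈ T
      · obtain ⟨z', hz'1, hz'2⟩ := hclassT y hyT z.1 hyY
        have : z' = z := Subtype.ext hz'1
        rw [this] at hz'2
        -- y = atok z, Adj x y, x ∈ S ⇒ atok z ∈ NN, but atok z ∈ T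
        have : (atok z).1 ∈ NN := ⟨x, hxS, hz'2 ▸ hxy⟩
        exact (atok z).2 (Or.inr this)
      · have hyS : y ∈ S := by
          by_contra hyS
          exact hyT (fun h => h.elim hyS hyNN)
        exact hstable x hxS y hyS hxy
  -- the matching function
  set gg : α → α := fun x => if hx : x ∈ NN then ctok ⟨x, hx⟩ else x with hgg
  have hgg1 : ∀ (x) (hx : x ∈ NN), gg x = ctok ⟨x, hx⟩ := by
    intro x hx
    simp only [hgg]
    exact dif_pos hx
  refine ⟨S, hstable, ⟨gg, ?_, ?_⟩, ?_⟩
  · intro a ha b hb hab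
    rw [hgg1 a ha, hgg1 b hb] at hab
    have h2 : ctok ⟨a, ha⟩ ∈ Y b := by rw [hab]; exact hctokY ⟨b, hb⟩
    exact hYdisj a b (ctok ⟨a, ha⟩) (hctokY ⟨a, ha⟩) h2
  · intro w hw
    rw [hgg1 w hw]
    exact ⟨hctokS ⟨w, hw⟩, (hctokadj ⟨w, hw⟩).symm⟩
  · -- shift automorphism
    refine ⟨Equiv.ofBijective atok ⟨hainj, hasurj⟩, ?_, ?_⟩
    · intro a b hab
      have hab' : H.Adj a.1 b.1 := hab
      show (H.induce T).Adj (atok a) (atok b)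
      rcases hE a.1 b.1 hab' with ⟨y, hyY, hay⟩ | ⟨y, hyY, hyb⟩ | ⟨y, hyY, y', hy'Y, hyy'⟩
      · -- y = atok b, Adj a y : triangle b a (atok b)
        have hy := hYT b y hyY
        rw [hy] at hay
        exact absurd (notri H hH hab'.symm (hatokadj b) hay) id
      · have hy := hYT a y hyY
        rw [hy] at hyb
        exact absurd (notri H hH hab' (hatokadj a) hyb.symm) id
      · have hy := hYT a y hyY
        have hy' := hYT b y' hy'Y
        rw [hy] at hyy'; rw [hy'] at hyy'
        exact hyy'
    · intro a
      show (H.induce T).Adj a (atok a)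
      exact hatokadj a
/-- A triangle-free graph `H` is M'-contractible iff `H` has a stable
set inducing an M'-contraction. -/
theorem trianglefree_mprime_contractible_iff {α : Type} [Fintype α]
    (H : SimpleGraph α) (hH : H.CliqueFree 3) :
    MprimeContractible H ↔ ∃ S : Set α, IsStableSet H S ∧ InducesMprimeContraction H S := by
  constructor
  · exact fun h => forward_dir H hH h
  · rintro ⟨S, hS, hind⟩
    exact backward_dir H S hS hind
end

section
/- If a graph H has a stable set that induces an M'-contraction, then H is M'-contractible. -/
open SimpleGraph

lemma star_connected {β : Type} (G : SimpleGraph β) (s : Set β) (hub : β) (hhub : hub ∈ s)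
    (h : ∀ x ∈ s, x = hub ∨ G.Adj x hub) : (G.induce s).Connected := by
  have : Nonempty s := ⟨⟨hub, hhub⟩⟩
  refine ⟨fun x y => ?_⟩
  have key : ∀ x : s, (G.induce s).Reachable x ⟨hub, hhub⟩ := by
    intro x
    rcases h x x.2 with h1 | h2
    · have : x = ⟨hub, hhub⟩ := Subtype.ext h1
      rw [this]
    · exact Adj.reachable h2
  exact (key x).trans (key y).symm

/-- If `H` has a stable set inducing an M'-contraction, then `H` is
M'-contractible. -/
theorem stable_set_induces_mprime_contractible {α : Type} [Fintype α]
    (H : SimpleGraph α) (S : Set α) (hS : IsStableSet H S)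
    (hind : InducesMprimeContraction H S) : MprimeContractible H := by
  classical
  set N := setNeighbors H S with hNdef
  set R : Set α := (S ∪ N)ᶜ with hRdef
  obtain ⟨⟨g, hginj, hg⟩, ⟨π, hπadj, hπshift⟩⟩ := hind
  have hSN : ∀ v ∈ S, v ∉ N := by
    intro v hv hvN
    obtain ⟨u, hu, hadj⟩ := hvN
    exact hS u hu v hv hadj
  have hmemR : ∀ v, v ∉ S → v ∉ N → v ∈ R := by
    intro v h1 h2
    simp [hRdef, h1, h2]
  have hRS : ∀ v ∈ R, v ∉ S := by
    intro v hv hvS; rw [hRdef] at hv; exact hv (Or.inl hvS)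
  have hRN : ∀ v ∈ R, v ∉ N := by
    intro v hv hvN; rw [hRdef] at hv; exact hv (Or.inr hvN)
  -- the shifted-partner function on R
  let p : α → α := fun v => if h : v ∈ R then ((π ⟨v, h⟩ : R) : α) else v
  have hpval : ∀ v (h : v ∈ R), p v = ((π ⟨v, h⟩ : R) : α) := by
    intro v h; simp only [p, dif_pos h]
  have hpR : ∀ v, v ∈ R → p v ∈ R := by
    intro v h; rw [hpval v h]; exact (π ⟨v, h⟩).2
  have hpadj : ∀ v (h : v ∈ R), H.Adj v (p v) := by
    intro v h; rw [hpval v h]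
    have := hπshift ⟨v, h⟩
    simpa using this
  have hpinj : ∀ u v, u ∈ R → v ∈ R → p u = p v → u = v := by
    intro u v hu hv hpe
    rw [hpval u hu, hpval v hv] at hpe
    have : π ⟨u, hu⟩ = π ⟨v, hv⟩ := Subtype.ext hpe
    have := π.injective this
    exact congrArg Subtype.val this
  have hppres : ∀ u v (hu : u ∈ R) (hv : v ∈ R), H.Adj u v → H.Adj (p u) (p v) := by
    intro u v hu hv h
    rw [hpval u hu, hpval v hv]
    have := hπadj ⟨u, hu⟩ ⟨v, hv⟩ (by simpa using h)
    simpa using this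
  have hgS : ∀ w ∈ N, g w ∈ S := fun w hw => (hg w hw).1
  have hgadj : ∀ w ∈ N, H.Adj (g w) w := fun w hw => (hg w hw).2
  -- adjacency to S forces membership in N
  have hadjN : ∀ u v, u ∈ S → H.Adj u v → v ∈ N := by
    intro u v hu h; exact ⟨u, hu, h⟩
  -- the branch sets
  let C : α → Set (α × Bool) := fun v =>
    if v ∈ S then {(v, false)}
    else if v ∈ N then {(v, false), (v, true), (g v, true)}
    else {(v, false), (p v, true)}
  have hCS : ∀ v ∈ S, C v = {(v, false)} := by
    intro v hv; simp only [C, if_pos hv]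
  have hCN : ∀ v, v ∉ S → v ∈ N → C v = {(v, false), (v, true), (g v, true)} := by
    intro v h1 h2; simp only [C, if_neg h1, if_pos h2]
  have hCR : ∀ v, v ∉ S → v ∉ N → C v = {(v, false), (p v, true)} := by
    intro v h1 h2; simp only [C, if_neg h1, if_neg h2]
  refine ⟨C, ?_, ?_, ?_, ?_⟩
  · -- roots
    intro v
    by_cases h1 : v ∈ S
    · rw [hCS v h1]; rfl
    by_cases h2 : v ∈ N
    · rw [hCN v h1 h2]; left; rfl
    · rw [hCR v h1 h2]; left; rfl
  · -- connectivity
    intro v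
    by_cases h1 : v ∈ S
    · rw [hCS v h1]
      exact star_connected _ _ (v, false) rfl (fun x hx => Or.inl hx)
    by_cases h2 : v ∈ N
    · rw [hCN v h1 h2]
      refine star_connected _ _ (g v, true) (by right; right; rfl) ?_
      intro x hx
      rcases hx with hx | hx | hx
      · right; subst hx
        exact ⟨(hgadj v h2).symm, Or.inr rfl⟩
      · right; subst hx
        exact ⟨(hgadj v h2).symm, Or.inr rfl⟩
      · left; exact hx
    · rw [hCR v h1 h2]
      have hvR := hmemR v h1 h2
      refine star_connected _ _ (p v, true) (by right; rfl) ?_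
      intro x hx
      rcases hx with hx | hx
      · right; subst hx
        exact ⟨hpadj v hvR, Or.inr rfl⟩
      · left; exact hx
  · -- disjointness
    intro u v huv
    rw [Set.disjoint_left]
    intro x hxu hxv
    -- characterize membership
    have key : ∀ w, ∀ y ∈ C w, (y.2 = false ∧ y.1 = w) ∨
        (y.2 = true ∧ ((w ∈ N ∧ (y.1 = w ∨ y.1 = g w)) ∨ (w ∈ R ∧ y.1 = p w))) := by
      intro w y hy
      by_cases h1 : w ∈ S
      · rw [hCS w h1] at hy
        left; rw [hy]; exact ⟨rfl, rfl⟩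
      by_cases h2 : w ∈ N
      · rw [hCN w h1 h2] at hy
        rcases hy with hy | hy | hy
        · left; rw [hy]; exact ⟨rfl, rfl⟩
        · right; rw [hy]; exact ⟨rfl, Or.inl ⟨h2, Or.inl rfl⟩⟩
        · right; rw [hy]; exact ⟨rfl, Or.inl ⟨h2, Or.inr rfl⟩⟩
      · rw [hCR w h1 h2] at hy
        rcases hy with hy | hy
        · left; rw [hy]; exact ⟨rfl, rfl⟩
        · right; rw [hy]; exact ⟨rfl, Or.inr ⟨hmemR w h1 h2, rfl⟩⟩
    rcases key u x hxu with ⟨hb, h1⟩ | ⟨hb, h1⟩ <;> rcases key v x hxv with ⟨hb', h2⟩ | ⟨hb', h2⟩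
    · exact huv (h1 ▸ h2 ▸ rfl)
    · rw [hb] at hb'; exact Bool.noConfusion hb'
    · rw [hb'] at hb; exact Bool.noConfusion hb
    · -- both true
      have hSNdisj : ∀ a, a ∈ S → a ∈ N → False := fun a ha hb => hSN a ha hb
      rcases h1 with ⟨huN, h1⟩ | ⟨huR, h1⟩ <;> rcases h2 with ⟨hvN, h2⟩ | ⟨hvR, h2⟩
      · rcases h1 with h1 | h1 <;> rcases h2 with h2 | h2
        · exact huv (h1 ▸ h2 ▸ rfl)
        · -- u = g v ∈ S but u ∈ N
          have : u = g v := h1 ▸ h2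
          exact hSNdisj u (this ▸ hgS v hvN) huN
        · have : g u = v := h1 ▸ h2
          exact hSNdisj v (this ▸ hgS u huN) hvN
        · have : g u = g v := h1 ▸ h2
          exact huv (hginj huN hvN this)
      · rcases h1 with h1 | h1
        · have he : u = p v := by rw [← h1, h2]
          exact hRN u (he ▸ hpR v hvR) huN
        · have he : g u = p v := by rw [← h1, h2]
          exact hRS (g u) (he ▸ hpR v hvR) (hgS u huN)
      · rcases h2 with h2 | h2
        · have he : v = p u := by rw [← h2, h1]
          exact hRN v (he ▸ hpR u huR) hvN
        · have he : g v = p u := by rw [← h2, h1]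
          exact hRS (g v) (he ▸ hpR u huR) (hgS v hvN)
      · exact huv (hpinj u v huR hvR (h1 ▸ h2 ▸ rfl))
  · -- edges
    intro u v huv
    by_cases hu1 : u ∈ S
    · have hvN : v ∈ N := hadjN u v hu1 huv
      have hv1 : v ∉ S := fun h => hS u hu1 v h huv
      refine ⟨(u, false), by rw [hCS u hu1]; rfl, (v, true), by rw [hCN v hv1 hvN]; right; left; rfl, ?_⟩
      exact ⟨huv, Or.inr rfl⟩
    by_cases hv1 : v ∈ S
    · have huN : u ∈ N := hadjN v u hv1 huv.symm
      refine ⟨(u, true), by rw [hCN u hu1 huN]; right; left; rfl, (v, false), by rw [hCS v hv1]; rfl, ?_⟩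
      exact ⟨huv, Or.inl rfl⟩
    by_cases hu2 : u ∈ N
    · refine ⟨(u, true), by rw [hCN u hu1 hu2]; right; left; rfl, (v, false), ?_, ⟨huv, Or.inl rfl⟩⟩
      by_cases hv2 : v ∈ N
      · rw [hCN v hv1 hv2]; left; rfl
      · rw [hCR v hv1 hv2]; left; rfl
    by_cases hv2 : v ∈ N
    · refine ⟨(u, false), by rw [hCR u hu1 hu2]; left; rfl, (v, true), by rw [hCN v hv1 hv2]; right; left; rfl, ?_⟩
      exact ⟨huv, Or.inr rfl⟩
    · have huR := hmemR u hu1 hu2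
      have hvR := hmemR v hv1 hv2
      refine ⟨(p u, true), by rw [hCR u hu1 hu2]; right; rfl, (p v, true), by rw [hCR v hv1 hv2]; right; rfl, ?_⟩
      exact ⟨hppres u v huR hvR huv, Or.inl rfl⟩
end

section
/- Every bipartite graph is M'-contractible. -/
open SimpleGraph

/-- A graph induced on a set with a "hub" adjacent to everything else is connected. -/
lemma induce_connected_of_hub {β : Type} (G : SimpleGraph β) (s : Set β) (c : β)
    (hc : c ∈ s) (h : ∀ x ∈ s, x ≠ c → G.Adj x c) : (G.induce s).Connected := by
  rw [SimpleGraph.connected_iff]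
  have key : ∀ x : s, (G.induce s).Reachable x ⟨c, hc⟩ := by
    rintro ⟨x, hx⟩
    by_cases hxc : x = c
    · subst hxc; exact SimpleGraph.Reachable.refl _
    · exact SimpleGraph.Adj.reachable (by simpa using h x hx hxc)
  exact ⟨fun x y => (key x).trans (key y).symm, ⟨⟨c, hc⟩⟩⟩

/-- König-type lemma: a bipartite graph has a vertex cover `D` together with an
injective choice of private neighbours outside `D`. -/
lemma exists_cover_with_partners {α : Type} [Fintype α] (H : SimpleGraph α)
    (S : Set α) (hS : IsStableSet H S) (hSc : IsStableSet H Sᶜ) :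
    ∃ (D : Finset α) (b : α → α),
      (∀ u v, H.Adj u v → u ∈ D ∨ v ∈ D) ∧
      (∀ v ∈ D, H.Adj v (b v) ∧ b v ∉ D) ∧
      Set.InjOn b ↑D := by
  classical
  set N : Finset α → Finset α :=
    fun X => Finset.univ.filter (fun w => ∃ v ∈ X, H.Adj v w) with hN
  have hmemN : ∀ (X : Finset α) (w : α), w ∈ N X ↔ ∃ v ∈ X, H.Adj v w := by
    intro X w; simp [hN]
  set A : Finset α := Finset.univ.filter (· ∈ S) with hA
  -- maximize deficiency
  obtain ⟨X, hXP, hmax⟩ := Finset.exists_max_image A.powerset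
    (fun X => (X.card : ℤ) - ((N X).card : ℤ)) ⟨∅, by simp⟩
  have hXA : X ⊆ A := Finset.mem_powerset.mp hXP
  have hXS : ∀ v ∈ X, v ∈ S := fun v hv => by
    have := hXA hv; simp [hA] at this; exact this
  have hNXS : ∀ w ∈ N X, w ∉ S := by
    intro w hw hwS
    obtain ⟨v, hv, hadj⟩ := (hmemN X w).mp hw
    exact hS v (hXS v hv) w hwS hadj
  -- first Hall application: match N X into X
  have hall1 : ∀ s : Finset {w // w ∈ N X},
      s.card ≤ (s.biUnion (fun w => Finset.univ.filter
        (fun x => x ∈ X ∧ H.Adj (w : α) x))).card := by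
    intro s
    set Y : Finset α := s.image Subtype.val with hY
    set Z : Finset α := s.biUnion (fun w => Finset.univ.filter
        (fun x => x ∈ X ∧ H.Adj (w : α) x)) with hZ
    have hYcard : Y.card = s.card := Finset.card_image_of_injective _ Subtype.val_injective
    have hYN : Y ⊆ N X := by
      intro y hy
      obtain ⟨⟨w, hw⟩, -, rfl⟩ := Finset.mem_image.mp hy
      exact hw
    have hZX : Z ⊆ X := by
      intro z hz
      obtain ⟨w, -, hzw⟩ := Finset.mem_biUnion.mp hz
      exact (Finset.mem_filter.mp hzw).2.1
    set X' : Finset α := X \ Z with hX'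
    have hX'P : X' ∈ A.powerset :=
      Finset.mem_powerset.mpr ((Finset.sdiff_subset).trans hXA)
    have hNsub : N X' ⊆ N X \ Y := by
      intro w hw
      obtain ⟨v, hv, hadj⟩ := (hmemN X' w).mp hw
      have hvX : v ∈ X := (Finset.mem_sdiff.mp hv).1
      have hvZ : v ∉ Z := (Finset.mem_sdiff.mp hv).2
      refine Finset.mem_sdiff.mpr ⟨(hmemN X w).mpr ⟨v, hvX, hadj⟩, ?_⟩
      intro hwY
      obtain ⟨i, hi, rfl⟩ := Finset.mem_image.mp hwY
      exact hvZ (Finset.mem_biUnion.mpr ⟨i, hi,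
        Finset.mem_filter.mpr ⟨Finset.mem_univ v, hvX, hadj.symm⟩⟩)
    have h1 : (X'.card : ℤ) = X.card - Z.card := by
      rw [hX', Finset.card_sdiff_of_subset hZX]
      exact_mod_cast Nat.cast_sub (Finset.card_le_card hZX)
    have h2 : ((N X').card : ℤ) ≤ (N X).card - Y.card := by
      have := Finset.card_le_card hNsub
      rw [Finset.card_sdiff_of_subset hYN] at this
      have hle := Finset.card_le_card hYN
      omega
    have h3 := hmax X' hX'P
    rw [← hYcard]
    omega
  obtain ⟨f1, hf1inj, hf1mem⟩ :=
    (Finset.all_card_le_biUnion_card_iff_existsInjective' _).mp hall1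
  -- second Hall application
  set A2 : Finset α := Finset.univ.filter
    (fun a => a ∈ S ∧ ∃ w, w ∉ N X ∧ H.Adj a w) with hA2
  have hA2S : ∀ a ∈ A2, a ∈ S := fun a ha => ((Finset.mem_filter.mp ha).2).1
  have hA2X : ∀ a ∈ A2, a ∉ X := by
    intro a ha haX
    obtain ⟨-, w, hwN, hadj⟩ := (Finset.mem_filter.mp ha).2
    exact hwN ((hmemN X w).mpr ⟨a, haX, hadj⟩)
  have hall2 : ∀ s : Finset {a // a ∈ A2},
      s.card ≤ (s.biUnion (fun a => Finset.univ.filter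
        (fun w => w ∉ N X ∧ H.Adj (a : α) w))).card := by
    intro s
    set Y : Finset α := s.image Subtype.val with hY
    set W : Finset α := s.biUnion (fun a => Finset.univ.filter
        (fun w => w ∉ N X ∧ H.Adj (a : α) w)) with hW
    have hYcard : Y.card = s.card := Finset.card_image_of_injective _ Subtype.val_injective
    have hYA2 : Y ⊆ A2 := by
      intro y hy
      obtain ⟨⟨a, ha⟩, -, rfl⟩ := Finset.mem_image.mp hy
      exact ha
    have hdisj : Disjoint X Y := by
      rw [Finset.disjoint_right]
      intro y hy
      exact fun hyX => hA2X y (hYA2 hy) hyX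
    set X' : Finset α := X ∪ Y with hX'
    have hX'P : X' ∈ A.powerset := by
      refine Finset.mem_powerset.mpr (Finset.union_subset hXA ?_)
      intro y hy
      simp only [hA, Finset.mem_filter, Finset.mem_univ, true_and]
      exact hA2S y (hYA2 hy)
    have hNsub : N X' ⊆ N X ∪ W := by
      intro w hw
      obtain ⟨v, hv, hadj⟩ := (hmemN X' w).mp hw
      rcases Finset.mem_union.mp hv with hvX | hvY
      · exact Finset.mem_union_left _ ((hmemN X w).mpr ⟨v, hvX, hadj⟩)
      · by_cases hwN : w ∈ N X
        · exact Finset.mem_union_left _ hwN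
        · obtain ⟨i, hi, rfl⟩ := Finset.mem_image.mp hvY
          exact Finset.mem_union_right _ (Finset.mem_biUnion.mpr
            ⟨i, hi, Finset.mem_filter.mpr ⟨Finset.mem_univ w, hwN, hadj⟩⟩)
    have h1 : (X'.card : ℤ) = X.card + Y.card := by
      rw [hX', Finset.card_union_of_disjoint hdisj]; push_cast; ring
    have h2 : ((N X').card : ℤ) ≤ (N X).card + W.card := by
      have := (Finset.card_le_card hNsub).trans (Finset.card_union_le _ _)
      exact_mod_cast this
    have h3 := hmax X' hX'P
    rw [← hYcard]
    omega
  obtain ⟨f2, hf2inj, hf2mem⟩ :=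
    (Finset.all_card_le_biUnion_card_iff_existsInjective' _).mp hall2
  -- assemble
  refine ⟨N X ∪ A2,
    fun v => if h : v ∈ N X then f1 ⟨v, h⟩ else
      if h2 : v ∈ A2 then f2 ⟨v, h2⟩ else v, ?_, ?_, ?_⟩
  · -- cover
    intro u v hadj
    by_contra hcon
    push_neg at hcon
    obtain ⟨hu, hv⟩ := hcon
    simp only [Finset.mem_union, not_or] at hu hv
    have huS : u ∉ S := by
      intro huS
      exact hu.2 (Finset.mem_filter.mpr ⟨Finset.mem_univ u, huS, v, hv.1, hadj⟩)
    have hvS : v ∉ S := by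
      intro hvS
      exact hv.2 (Finset.mem_filter.mpr ⟨Finset.mem_univ v, hvS, u, hu.1, hadj.symm⟩)
    exact hSc u huS v hvS hadj
  · -- partner properties
    intro v hv
    rcases Finset.mem_union.mp hv with h | h
    · have hmem := hf1mem ⟨v, h⟩
      simp only [Finset.mem_filter, Finset.mem_univ, true_and] at hmem
      simp only [dif_pos h]
      refine ⟨hmem.2, ?_⟩
      simp only [Finset.mem_union, not_or]
      constructor
      · intro hc; exact hNXS _ hc (hXS _ hmem.1)
      · intro hc; exact hA2X _ hc hmem.1
    · have hvN : v ∉ N X := fun hc => hNXS v hc (hA2S v h)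
      have hmem := hf2mem ⟨v, h⟩
      simp only [Finset.mem_filter, Finset.mem_univ, true_and] at hmem
      simp only [dif_neg hvN, dif_pos h]
      refine ⟨hmem.2, ?_⟩
      simp only [Finset.mem_union, not_or]
      refine ⟨hmem.1, ?_⟩
      intro hc
      exact hS v (hA2S v h) _ (hA2S _ hc) hmem.2
  · -- injectivity
    intro u hu v hv heq
    simp only [Finset.coe_union, Set.mem_union, Finset.mem_coe] at hu hv
    have hbS : ∀ w (hw : w ∈ N X),
        f1 ⟨w, hw⟩ ∈ S ∧ f1 ⟨w, hw⟩ ∈ X := by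
      intro w hw
      have hmem := hf1mem ⟨w, hw⟩
      simp only [Finset.mem_filter, Finset.mem_univ, true_and] at hmem
      exact ⟨hXS _ hmem.1, hmem.1⟩
    have hbS2 : ∀ w (hw : w ∈ A2), f2 ⟨w, hw⟩ ∉ S := by
      intro w hw
      have hmem := hf2mem ⟨w, hw⟩
      simp only [Finset.mem_filter, Finset.mem_univ, true_and] at hmem
      exact fun hc => hS w (hA2S w hw) _ hc hmem.2
    rcases hu with hu | hu <;> rcases hv with hv | hv
    · have heq' : f1 ⟨u, hu⟩ = f1 ⟨v, hv⟩ := by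
        simpa only [dif_pos hu, dif_pos hv] using heq
      exact congrArg Subtype.val (hf1inj heq')
    · have hvN : v ∉ N X := fun hc => hNXS v hc (hA2S v hv)
      have heq' : f1 ⟨u, hu⟩ = f2 ⟨v, hv⟩ := by
        simpa only [dif_pos hu, dif_neg hvN, dif_pos hv] using heq
      exact absurd ((hbS u hu).1) (heq' ▸ hbS2 v hv)
    · have huN : u ∉ N X := fun hc => hNXS u hc (hA2S u hu)
      have heq' : f2 ⟨u, hu⟩ = f1 ⟨v, hv⟩ := by
        simpa only [dif_neg huN, dif_pos hu, dif_pos hv] using heq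
      exact absurd ((hbS v hv).1) (heq' ▸ hbS2 u hu)
    · have huN : u ∉ N X := fun hc => hNXS u hc (hA2S u hu)
      have hvN : v ∉ N X := fun hc => hNXS v hc (hA2S v hv)
      have heq' : f2 ⟨u, hu⟩ = f2 ⟨v, hv⟩ := by
        simpa only [dif_neg huN, dif_pos hu, dif_neg hvN, dif_pos hv] using heq
      exact congrArg Subtype.val (hf2inj heq')

/-- Every bipartite graph is M'-contractible. -/
theorem bipartite_mprime_contractible {α : Type} [Fintype α] (H : SimpleGraph α)
    (hbip : ∃ S : Set α, IsStableSet H S ∧ IsStableSet H Sᶜ) :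
    MprimeContractible H := by
  classical
  obtain ⟨S, hS, hSc⟩ := hbip
  obtain ⟨D, b, hcover, hpart, hinj⟩ := exists_cover_with_partners H S hS hSc
  refine ⟨fun v => insert (v, false)
      {p : α × Bool | v ∈ D ∧ (p = (v, true) ∨ p = (b v, true))}, ?_, ?_, ?_, ?_⟩
  · intro v
    exact Set.mem_insert _ _
  · intro v
    by_cases h : v ∈ D
    · refine induce_connected_of_hub _ _ (b v, true)
        (Set.mem_insert_iff.mpr (Or.inr ⟨h, Or.inr rfl⟩)) ?_
      intro x hx hne
      have hadj := (hpart v h).1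
      rcases Set.mem_insert_iff.mp hx with h1 | ⟨-, h1 | h1⟩
      · rw [h1]; exact ⟨hadj, Or.inr rfl⟩
      · rw [h1]; exact ⟨hadj, Or.inl rfl⟩
      · exact absurd h1 hne
    · refine induce_connected_of_hub _ _ (v, false) (Set.mem_insert _ _) ?_
      intro x hx hne
      rcases Set.mem_insert_iff.mp hx with h1 | ⟨hvD, -⟩
      · exact absurd h1 hne
      · exact absurd hvD h
  · intro u v huv
    rw [Set.disjoint_left]
    intro x hxu hxv
    rcases Set.mem_insert_iff.mp hxu with rfl | ⟨huD, rfl | rfl⟩ <;>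
      rcases Set.mem_insert_iff.mp hxv with h2 | ⟨hvD, h2 | h2⟩ <;>
      simp only [Prod.mk.injEq] at h2
    · exact huv h2.1
    · exact Bool.noConfusion h2.2
    · exact Bool.noConfusion h2.2
    · exact Bool.noConfusion h2.2
    · exact huv h2.1
    · exact (hpart v hvD).2 (h2.1 ▸ huD)
    · exact Bool.noConfusion h2.2
    · exact (hpart u huD).2 (h2.1.symm ▸ hvD)
    · exact huv (hinj huD hvD h2.1)
  · intro u v hadj
    rcases hcover u v hadj with h | h
    · exact ⟨(u, true), Set.mem_insert_iff.mpr (Or.inr ⟨h, Or.inl rfl⟩),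
        (v, false), Set.mem_insert _ _, ⟨hadj, Or.inl rfl⟩⟩
    · exact ⟨(u, false), Set.mem_insert _ _,
        (v, true), Set.mem_insert_iff.mpr (Or.inr ⟨h, Or.inl rfl⟩), ⟨hadj, Or.inr rfl⟩⟩
end

section
/- Every subgraph of a rooted-contractible graph is rooted-contractible. -/
open SimpleGraph

section Aux

variable {α α' β : Type}

/-- An edge of `H` that comes from `H'` via `ι`. -/
@[reducible]
def OldE (H' : SimpleGraph α') (ι : α' ↪ α) (a b : α) : Prop :=
  ∃ p : α' × α', ι p.1 = a ∧ ι p.2 = b ∧ H'.Adj p.1 p.2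

lemma OldE_symm {H' : SimpleGraph α'} {ι : α' ↪ α} {a b : α} (h : OldE H' ι a b) :
    OldE H' ι b a := by
  obtain ⟨p, h1, h2, h3⟩ := h
  exact ⟨(p.2, p.1), h2, h1, h3.symm⟩

open scoped Classical in
/-- Extension of the embedding `f` from `α'` to all of `α`. -/
noncomputable def fe (ι : α' ↪ α) (f : α' ↪ β) (a : α) : β ⊕ (α ⊕ Sym2 α) :=
  if h : ∃ c, ι c = a then .inl (f h.choose) else .inr (.inl a)

lemma fe_apply_ι (ι : α' ↪ α) (f : α' ↪ β) (a' : α') : fe ι f (ι a') = .inl (f a') := by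
  have h : ∃ c, ι c = ι a' := ⟨a', rfl⟩
  rw [fe, dif_pos h, ι.injective h.choose_spec]

lemma fe_apply_not (ι : α' ↪ α) (f : α' ↪ β) (a : α) (h : ¬ ∃ c, ι c = a) :
    fe ι f a = .inr (.inl a) := by rw [fe, dif_neg h]

lemma fe_eq_inl {ι : α' ↪ α} {f : α' ↪ β} {a : α} {z : β} (h : fe ι f a = .inl z) :
    ∃ a', ι a' = a ∧ f a' = z := by
  by_cases hc : ∃ c, ι c = a
  · refine ⟨hc.choose, hc.choose_spec, ?_⟩
    rw [fe, dif_pos hc] at h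
    exact Sum.inl.inj h
  · rw [fe_apply_not ι f a hc] at h
    simp at h

lemma fe_ne_gadget (ι : α' ↪ α) (f : α' ↪ β) (a : α) (e : Sym2 α) :
    fe ι f a ≠ .inr (.inr e) := by
  by_cases h : ∃ c, ι c = a
  · rw [fe, dif_pos h]; simp
  · rw [fe, dif_neg h]; simp

lemma fe_ne_inr_inl_of_mem {ι : α' ↪ α} {f : α' ↪ β} {a c : α} (hc : ∃ c', ι c' = c) :
    fe ι f a ≠ .inr (.inl c) := by
  by_cases h : ∃ c, ι c = a
  · rw [fe, dif_pos h]; simp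
  · rw [fe, dif_neg h]
    intro hh
    obtain rfl : a = c := by simpa using hh
    exact h hc

lemma fe_injective (ι : α' ↪ α) (f : α' ↪ β) : Function.Injective (fe ι f) := by
  intro a b hab
  by_cases ha : ∃ c, ι c = a <;> by_cases hb : ∃ c, ι c = b
  · rw [fe, dif_pos ha, fe, dif_pos hb] at hab
    have := f.injective (Sum.inl.inj hab)
    rw [← ha.choose_spec, ← hb.choose_spec, this]
  · rw [fe, dif_pos ha, fe, dif_neg hb] at hab
    simp at hab
  · rw [fe, dif_neg ha, fe, dif_pos hb] at hab
    simp at hab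
  · rw [fe, dif_neg ha, fe, dif_neg hb] at hab
    simpa using hab

/-- The extended graph: `G` together with, for every edge of `H` not coming from `H'`,
a path of length two through a fresh "gadget" vertex. -/
def GExt (H : SimpleGraph α) (H' : SimpleGraph α') (ι : α' ↪ α) (f : α' ↪ β)
    (G : SimpleGraph β) : SimpleGraph (β ⊕ (α ⊕ Sym2 α)) :=
  SimpleGraph.fromRel (fun x y =>
    (∃ u v, G.Adj u v ∧ x = .inl u ∧ y = .inl v) ∨
    (∃ a b, H.Adj a b ∧ ¬ OldE H' ι a b ∧ x = fe ι f a ∧ y = .inr (.inr s(a, b))))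

variable {H : SimpleGraph α} {H' : SimpleGraph α'} {ι : α' ↪ α} {f : α' ↪ β}
  {G : SimpleGraph β}

lemma gext_adj_inl {x y : β} :
    (GExt H H' ι f G).Adj (.inl x) (.inl y) ↔ G.Adj x y := by
  constructor
  · rintro ⟨hne, (⟨u, v, huv, hx, hy⟩ | ⟨a, b, _, _, _, hy⟩) |
      (⟨u, v, huv, hx, hy⟩ | ⟨a, b, _, _, _, hy⟩)⟩
    · cases hx; cases hy; exact huv
    · exact absurd hy (by simp)
    · cases hx; cases hy; exact huv.symm
    · exact absurd hy (by simp)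
  · intro hxy
    exact ⟨by simpa using hxy.ne, Or.inl (Or.inl ⟨x, y, hxy, rfl, rfl⟩)⟩

lemma gext_adj_gadget {x : β ⊕ (α ⊕ Sym2 α)} {e : Sym2 α}
    (h : (GExt H H' ι f G).Adj x (.inr (.inr e))) :
    ∃ a b, H.Adj a b ∧ ¬ OldE H' ι a b ∧ x = fe ι f a ∧ e = s(a, b) := by
  obtain ⟨hne, (⟨u, v, huv, hx, hy⟩ | ⟨a, b, hab, ho, hx, hy⟩) |
      (⟨u, v, huv, hx, hy⟩ | ⟨a, b, hab, ho, hx, hy⟩)⟩ := h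
  · exact absurd hy (by simp)
  · exact ⟨a, b, hab, ho, hx, by simpa using hy⟩
  · exact absurd hx (by simp)
  · exact absurd hx.symm (fe_ne_gadget ι f a e)

lemma gext_adj_inr_inl {c : α} {y : β ⊕ (α ⊕ Sym2 α)}
    (h : (GExt H H' ι f G).Adj (.inr (.inl c)) y) : ¬ ∃ c', ι c' = c := by
  obtain ⟨hne, (⟨u, v, huv, hx, hy⟩ | ⟨a, b, hab, ho, hx, hy⟩) |
      (⟨u, v, huv, hx, hy⟩ | ⟨a, b, hab, ho, hx, hy⟩)⟩ := h
  · exact absurd hx (by simp)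
  · intro hc; exact fe_ne_inr_inl_of_mem hc hx.symm
  · exact absurd hy (by simp)
  · exact absurd hy (by simp)

lemma gext_adj_fe_gadget {a b : α} (hab : H.Adj a b) (ho : ¬ OldE H' ι a b) :
    (GExt H H' ι f G).Adj (fe ι f a) (.inr (.inr s(a, b))) :=
  ⟨fe_ne_gadget ι f a _, Or.inl (Or.inr ⟨a, b, hab, ho, rfl, rfl⟩)⟩

lemma gext_adj_gadget_fe {a b : α} (hab : H.Adj a b) (ho : ¬ OldE H' ι a b) :
    (GExt H H' ι f G).Adj (.inr (.inr s(a, b))) (fe ι f b) := by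
  refine ⟨(fe_ne_gadget ι f b _).symm, Or.inr (Or.inr ⟨b, a, hab.symm,
    fun hh => ho (OldE_symm hh), rfl, ?_⟩)⟩
  rw [Sym2.eq_swap]

/-- The inclusion homomorphism `G →g GExt`. -/
@[reducible]
def homInl (H : SimpleGraph α) (H' : SimpleGraph α') (ι : α' ↪ α) (f : α' ↪ β)
    (G : SimpleGraph β) : G →g GExt H H' ι f G where
  toFun := Sum.inl
  map_rel' := fun h => gext_adj_inl.mpr h


variable {S : HScheme H' G f}

lemma path_congr (S : HScheme H' G f) {u v u₂ v₂ : α'} (h : H'.Adj u v) (h₂ : H'.Adj u₂ v₂)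
    (hu : u = u₂) (hv : v = v₂) :
    S.path u₂ v₂ h₂ = (S.path u v h).copy (by rw [hu]) (by rw [hv]) := by
  subst hu; subst hv
  rfl

open scoped Classical in
/-- The `H`-scheme in `GExt` extending the `H'`-scheme `S`. -/
noncomputable def extPath (H : SimpleGraph α) {H' : SimpleGraph α'} (ι : α' ↪ α) (f : α' ↪ β)
    (G : SimpleGraph β) (S : HScheme H' G f) (a b : α) (hab : H.Adj a b) :
    (GExt H H' ι f G).Walk (fe ι f a) (fe ι f b) :=
  if ho : OldE H' ι a b then
    ((S.path ho.choose.1 ho.choose.2 ho.choose_spec.2.2).map (homInl H H' ι f G)).copy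
      (by exact (fe_apply_ι ι f _).symm.trans (congrArg (fe ι f) ho.choose_spec.1))
      (by exact (fe_apply_ι ι f _).symm.trans (congrArg (fe ι f) ho.choose_spec.2.1))
  else
    .cons (gext_adj_fe_gadget hab ho) (.cons (gext_adj_gadget_fe hab ho) .nil)

lemma extPath_support_old {a b : α} (hab : H.Adj a b) (ho : OldE H' ι a b) :
    (extPath H ι f G S a b hab).support =
      ((S.path ho.choose.1 ho.choose.2 ho.choose_spec.2.2).support).map Sum.inl := by
  rw [extPath, dif_pos ho, Walk.support_copy, Walk.support_map]
  rfl

lemma extPath_support_new {a b : α} (hab : H.Adj a b) (ho : ¬ OldE H' ι a b) :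
    (extPath H ι f G S a b hab).support =
      [fe ι f a, .inr (.inr s(a, b)), fe ι f b] := by
  rw [extPath, dif_neg ho]
  rfl

lemma cons2_congr {γ : Type} {K : SimpleGraph γ} {u v m m' : γ} (hm : m = m')
    (h1 : K.Adj u m) (h2 : K.Adj m v) (h1' : K.Adj u m') (h2' : K.Adj m' v) :
    Walk.cons h1 (Walk.cons h2 Walk.nil) = Walk.cons h1' (Walk.cons h2' Walk.nil) := by
  subst hm; rfl

lemma extPath_symm {a b : α} (hab : H.Adj a b) :
    extPath H ι f G S b a hab.symm = (extPath H ι f G S a b hab).reverse := by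
  by_cases ho : OldE H' ι a b
  · have ho' : OldE H' ι b a := OldE_symm ho
    rw [extPath, dif_pos ho', extPath, dif_pos ho]
    have hq1 : ho.choose.2 = ho'.choose.1 :=
      ι.injective (ho.choose_spec.2.1.trans ho'.choose_spec.1.symm)
    have hq2 : ho.choose.1 = ho'.choose.2 :=
      ι.injective (ho.choose_spec.1.trans ho'.choose_spec.2.1.symm)
    rw [Walk.reverse_copy, Walk.reverse_map, ← S.path_symm,
      path_congr S (ho.choose_spec.2.2.symm) ho'.choose_spec.2.2 hq1 hq2,
      Walk.map_copy, Walk.copy_copy]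
  · have ho' : ¬ OldE H' ι b a := fun hh => ho (OldE_symm hh)
    rw [extPath, dif_neg ho', extPath, dif_neg ho]
    exact cons2_congr (by rw [Sym2.eq_swap]) _ _ _ _

lemma fe_eq_inr_inl {a c : α} (h : fe ι f a = .inr (.inl c)) : a = c := by
  by_cases hc : ∃ c', ι c' = a
  · rw [fe, dif_pos hc] at h; simp at h
  · rw [fe, dif_neg hc] at h; simpa using h

lemma extPath_isPath {a b : α} (hab : H.Adj a b) :
    (extPath H ι f G S a b hab).IsPath := by
  by_cases ho : OldE H' ι a b
  · rw [extPath, dif_pos ho, Walk.isPath_copy]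
    exact Walk.map_isPath_of_injective (fun x y hh => Sum.inl.inj hh)
      (S.path_isPath _ _ _)
  · rw [extPath, dif_neg ho, Walk.isPath_def]
    have h1 : fe ι f a ≠ .inr (.inr s(a, b)) := fe_ne_gadget ι f a _
    have h2 : fe ι f b ≠ .inr (.inr s(a, b)) := fe_ne_gadget ι f b _
    have h3 : fe ι f a ≠ fe ι f b := fun hh => hab.ne (fe_injective ι f hh)
    simp [Walk.support_cons, List.nodup_cons, h1, h2, h3, Ne.symm h2]

lemma extPath_root_mem {a b : α} (hab : H.Adj a b) (w : α)
    (hw : fe ι f w ∈ (extPath H ι f G S a b hab).support) : w = a ∨ w = b := by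
  by_cases ho : OldE H' ι a b
  · rw [extPath_support_old hab ho] at hw
    obtain ⟨z, hz, hzw⟩ := List.mem_map.mp hw
    obtain ⟨w', hw1, hw2⟩ := fe_eq_inl hzw.symm
    rcases S.root_mem _ _ ho.choose_spec.2.2 w' (hw2 ▸ hz) with h1 | h1
    · left; rw [← hw1, h1, ho.choose_spec.1]
    · right; rw [← hw1, h1, ho.choose_spec.2.1]
  · rw [extPath_support_new hab ho] at hw
    simp only [List.mem_cons, List.mem_singleton, List.not_mem_nil, or_false] at hw
    rcases hw with hw | hw | hw
    · exact Or.inl (fe_injective ι f hw)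
    · exact absurd hw (fe_ne_gadget ι f w _)
    · exact Or.inr (fe_injective ι f hw)

lemma extPath_common (x : β ⊕ (α ⊕ Sym2 α))
    (hx : ∃ u v, ∃ h : H.Adj u v, x ∈ (extPath H ι f G S u v h).support) :
    ∃ z : α, ∀ u v (h : H.Adj u v),
      x ∈ (extPath H ι f G S u v h).support → z = u ∨ z = v := by
  obtain ⟨u0, v0, h0, hm0⟩ := hx
  match x with
  | .inr (.inr e) =>
    have gadget_mem : ∀ u v (h : H.Adj u v),
        (.inr (.inr e) : β ⊕ (α ⊕ Sym2 α)) ∈ (extPath H ι f G S u v h).support →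
        e = s(u, v) := by
      intro u v h hmem
      by_cases ho : OldE H' ι u v
      · rw [extPath_support_old h ho] at hmem
        obtain ⟨z, _, hz⟩ := List.mem_map.mp hmem
        simp at hz
      · rw [extPath_support_new h ho] at hmem
        simp only [List.mem_cons, List.mem_singleton, List.not_mem_nil, or_false] at hmem
        rcases hmem with hw | hw | hw
        · exact absurd hw.symm (fe_ne_gadget ι f u _)
        · exact (by simpa using hw.symm : s(u,v) = e).symm
        · exact absurd hw.symm (fe_ne_gadget ι f v _)
    refine ⟨u0, fun u v h hmem => ?_⟩
    have he1 := gadget_mem u0 v0 h0 hm0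
    have he2 := gadget_mem u v h hmem
    rw [he1, Sym2.eq_iff] at he2
    rcases he2 with ⟨h1, _⟩ | ⟨h1, _⟩
    · exact Or.inl h1
    · exact Or.inr h1
  | .inr (.inl c) =>
    refine ⟨c, fun u v h hmem => ?_⟩
    by_cases ho : OldE H' ι u v
    · rw [extPath_support_old h ho] at hmem
      obtain ⟨z, _, hz⟩ := List.mem_map.mp hmem
      simp at hz
    · rw [extPath_support_new h ho] at hmem
      simp only [List.mem_cons, List.mem_singleton, List.not_mem_nil, or_false] at hmem
      rcases hmem with hw | hw | hw
      · exact Or.inl (fe_eq_inr_inl hw.symm).symm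
      · simp at hw
      · exact Or.inr (fe_eq_inr_inl hw.symm).symm
  | .inl z0 =>
    by_cases hz : ∃ w', f w' = z0
    · obtain ⟨w', rfl⟩ := hz
      refine ⟨ι w', fun u v h hmem => ?_⟩
      by_cases ho : OldE H' ι u v
      · rw [extPath_support_old h ho] at hmem
        obtain ⟨z, hzmem, hz2⟩ := List.mem_map.mp hmem
        obtain rfl : z = f w' := Sum.inl.inj hz2
        rcases S.root_mem _ _ ho.choose_spec.2.2 w' hzmem with h1 | h1
        · left; rw [h1, ho.choose_spec.1]
        · right; rw [h1, ho.choose_spec.2.1]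
      · rw [extPath_support_new h ho] at hmem
        simp only [List.mem_cons, List.mem_singleton, List.not_mem_nil, or_false] at hmem
        rcases hmem with hw | hw | hw
        · obtain ⟨u', hu1, hu2⟩ := fe_eq_inl hw.symm
          left; rw [← hu1, f.injective hu2]
        · simp at hw
        · obtain ⟨u', hu1, hu2⟩ := fe_eq_inl hw.symm
          right; rw [← hu1, f.injective hu2]
    · have hold : ∀ u v (h : H.Adj u v),
          (.inl z0 : β ⊕ (α ⊕ Sym2 α)) ∈ (extPath H ι f G S u v h).support →
          ∃ ho : OldE H' ι u v,
            z0 ∈ (S.path ho.choose.1 ho.choose.2 ho.choose_spec.2.2).support := by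
        intro u v h hmem
        by_cases ho : OldE H' ι u v
        · rw [extPath_support_old h ho] at hmem
          obtain ⟨z, hzmem, hz2⟩ := List.mem_map.mp hmem
          exact ⟨ho, Sum.inl.inj hz2 ▸ hzmem⟩
        · rw [extPath_support_new h ho] at hmem
          simp only [List.mem_cons, List.mem_singleton, List.not_mem_nil, or_false] at hmem
          rcases hmem with hw | hw | hw
          · obtain ⟨u', _, hu2⟩ := fe_eq_inl hw.symm
            exact absurd ⟨u', hu2⟩ hz
          · simp at hw
          · obtain ⟨u', _, hu2⟩ := fe_eq_inl hw.symm
            exact absurd ⟨u', hu2⟩ hz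
      obtain ⟨ho0, hz0⟩ := hold u0 v0 h0 hm0
      obtain ⟨z', hz'⟩ := S.common_endpoint z0 ⟨_, _, _, hz0⟩
      refine ⟨ι z', fun u v h hmem => ?_⟩
      obtain ⟨ho, hzs⟩ := hold u v h hmem
      rcases hz' _ _ _ hzs with h1 | h1
      · left; rw [h1, ho.choose_spec.1]
      · right; rw [h1, ho.choose_spec.2.1]

/-- The extended scheme. -/
noncomputable def extScheme (H : SimpleGraph α) {H' : SimpleGraph α'} (ι : α' ↪ α)
    (f : α' ↪ β) (G : SimpleGraph β) (S : HScheme H' G f) :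
    HScheme H (GExt H H' ι f G) ⟨fe ι f, fe_injective ι f⟩ where
  path := extPath H ι f G S
  path_symm := fun u v h => extPath_symm h
  path_isPath := fun u v h => extPath_isPath h
  root_mem := fun u v h w hw => extPath_root_mem h w hw
  common_endpoint := fun x hx => extPath_common x hx

lemma exists_adj_of_ne {γ : Type} {K : SimpleGraph γ} {s : Set γ}
    (hc : (K.induce s).Connected) {x y : γ} (hx : x ∈ s) (hy : y ∈ s) (hxy : x ≠ y) :
    ∃ z ∈ s, K.Adj x z := by
  have key : ∀ (u v : s) (w : (K.induce s).Walk u v), u ≠ v → ∃ z ∈ s, K.Adj u.1 z := by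
    intro u v w hne
    cases w with
    | nil => exact absurd rfl hne
    | @cons _ m _ h p => exact ⟨m.1, m.2, h⟩
  obtain ⟨w⟩ := hc.preconnected ⟨x, hx⟩ ⟨y, hy⟩
  exact key _ _ w (fun hh => hxy (congrArg Subtype.val hh))

lemma pendant_connected {γ : Type} {K : SimpleGraph γ} {s t : Set γ} {a : γ}
    (hc : (K.induce s).Connected) (has : a ∈ s) (hat : a ∉ t)
    (hpend : ∀ x ∈ t, ∀ y ∈ s, K.Adj x y → y = a) :
    (K.induce (s \ t)).Connected := by
  classical
  have key : ∀ (n : ℕ) (x : γ) (hx : x ∈ s \ t)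
      (w : (K.induce s).Walk ⟨x, hx.1⟩ ⟨a, has⟩), w.length = n →
      (K.induce (s \ t)).Reachable ⟨x, hx⟩ ⟨a, has, hat⟩ := by
    intro n
    induction n with
    | zero =>
      intro x hx w hw
      have hxa : x = a := congrArg Subtype.val (Walk.eq_of_length_eq_zero hw)
      subst hxa
      exact Reachable.refl _
    | succ n ih =>
      intro x hx w hw
      cases w with
      | nil => simp at hw
      | @cons _ m _ h p =>
        by_cases hm : m.1 ∈ t
        · have hxa : x = a := hpend m.1 hm x hx.1 ((h : K.Adj x m.1).symm)
          subst hxa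
          exact Reachable.refl _
        · have hm' : m.1 ∈ s \ t := ⟨m.2, hm⟩
          have hr := ih m.1 hm' p (by simpa [Walk.length_cons] using hw)
          have hadj : (K.induce (s \ t)).Adj ⟨x, hx⟩ ⟨m.1, hm'⟩ := (h : K.Adj x m.1)
          exact hadj.reachable.trans hr
  have reach_a : ∀ u : ↥(s \ t), (K.induce (s \ t)).Reachable u ⟨a, has, hat⟩ := by
    intro u
    obtain ⟨w⟩ := hc.preconnected ⟨u.1, u.2.1⟩ ⟨a, has⟩
    exact key w.length u.1 u.2 w rfl
  have hne : Nonempty ↥(s \ t) := ⟨⟨a, has, hat⟩⟩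
  exact ⟨fun u v => (reach_a u).trans (reach_a v).symm⟩

end Aux

/-- Every subgraph of a rooted-contractible graph is
rooted-contractible.  Here `H'` is (isomorphic to) a subgraph of `H`, witnessed by an
injection `ι` of the vertices carrying edges of `H'` to edges of `H`. -/
theorem subgraph_rooted_contractible {α α' : Type} [Fintype α] [Fintype α']
    (H : SimpleGraph α) (H' : SimpleGraph α') (ι : α' ↪ α)
    (hι : ∀ a b, H'.Adj a b → H.Adj (ι a) (ι b))
    (h : IsRootedContractible H) : IsRootedContractible H' := by
  classical
  intro β _inst G f hS
  obtain ⟨S⟩ := hS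
  haveI : Fintype (Sym2 α) := Fintype.ofFinite _
  obtain ⟨C, hroot, hconn, hdisj, hedge⟩ :=
    h (β ⊕ (α ⊕ Sym2 α)) (GExt H H' ι f G) ⟨fe ι f, fe_injective ι f⟩
      ⟨extScheme H ι f G S⟩
  have hroot' : ∀ v, fe ι f v ∈ C v := hroot
  have F1 : ∀ v u, fe ι f u ∈ C v → u = v := by
    intro v u hu
    by_contra hne
    exact Set.disjoint_left.mp (hdisj hne) (hroot' u) hu
  have F2 : ∀ v x, x ∈ C v → x ≠ fe ι f v →
      ∃ z ∈ C v, (GExt H H' ι f G).Adj x z :=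
    fun v x hx hne => exists_adj_of_ne (hconn v) hx (hroot' v) hne
  have F5 : ∀ v (e : Sym2 α), (Sum.inr (Sum.inr e) : β ⊕ (α ⊕ Sym2 α)) ∈ C v →
      ∃ b, H.Adj v b ∧ ¬ OldE H' ι v b ∧ e = s(v, b) := by
    intro v e he
    obtain ⟨z, hz, hadj⟩ := F2 v _ he (Ne.symm (fe_ne_gadget ι f v e))
    obtain ⟨a, b, hab, ho, hzfe, hes⟩ := gext_adj_gadget hadj.symm
    obtain rfl : a = v := F1 v a (hzfe ▸ hz)
    exact ⟨b, hab, ho, hes⟩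
  have F3 : ∀ (a' : α') (c : α),
      (Sum.inr (Sum.inl c) : β ⊕ (α ⊕ Sym2 α)) ∈ C (ι a') → False := by
    intro a' c hc
    have hne : (Sum.inr (Sum.inl c) : β ⊕ (α ⊕ Sym2 α)) ≠ fe ι f (ι a') := by
      rw [fe_apply_ι]; simp
    obtain ⟨z, hz, hadj⟩ := F2 _ _ hc hne
    have hcnr := gext_adj_inr_inl hadj
    have hfec : fe ι f c = Sum.inr (Sum.inl c) := fe_apply_not ι f c hcnr
    have hcv := F1 (ι a') c (hfec ▸ hc)
    exact hcnr ⟨a', hcv.symm⟩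
  have F4 : ∀ (a' : α') (e : Sym2 α), ∀ y ∈ C (ι a'),
      (GExt H H' ι f G).Adj (Sum.inr (Sum.inr e)) y → y = Sum.inl (f a') := by
    intro a' e y hy hadj
    obtain ⟨a, b, hab, ho, hyfe, hes⟩ := gext_adj_gadget hadj.symm
    obtain rfl : a = ι a' := F1 _ a (hyfe ▸ hy)
    rw [hyfe, fe_apply_ι]
  refine ⟨fun a' => {x : β | (Sum.inl x : β ⊕ (α ⊕ Sym2 α)) ∈ C (ι a')},
    ?_, ?_, ?_, ?_⟩
  · intro a'
    have := hroot' (ι a')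
    rwa [fe_apply_ι] at this
  · -- connectivity
    intro a'
    have hmemroot : (Sum.inl (f a') : β ⊕ (α ⊕ Sym2 α)) ∈ C (ι a') := by
      have := hroot' (ι a'); rwa [fe_apply_ι] at this
    set s : Set (β ⊕ (α ⊕ Sym2 α)) := C (ι a') with hs
    set t : Set (β ⊕ (α ⊕ Sym2 α)) :=
      {x | x ∈ C (ι a') ∧ ∃ e : Sym2 α, x = Sum.inr (Sum.inr e)} with ht
    have hpend : ∀ x ∈ t, ∀ y ∈ s, (GExt H H' ι f G).Adj x y → y = Sum.inl (f a') := by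
      rintro x ⟨hxs, e, rfl⟩ y hys hadj
      exact F4 a' e y hys hadj
    have hat : (Sum.inl (f a') : β ⊕ (α ⊕ Sym2 α)) ∉ t := by
      rintro ⟨-, e, hh⟩; simp at hh
    have hcon2 := pendant_connected (hconn (ι a')) hmemroot hat hpend
    have transfer : ∀ (u v : ↥(s \ t)) (w : ((GExt H H' ι f G).induce (s \ t)).Walk u v)
        (x y : β) (hx : u.1 = Sum.inl x) (hy : v.1 = Sum.inl y)
        (hx' : (Sum.inl x : β ⊕ (α ⊕ Sym2 α)) ∈ C (ι a'))
        (hy' : (Sum.inl y : β ⊕ (α ⊕ Sym2 α)) ∈ C (ι a')),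
        (G.induce {x : β | (Sum.inl x : β ⊕ (α ⊕ Sym2 α)) ∈ C (ι a')}).Reachable
          ⟨x, hx'⟩ ⟨y, hy'⟩ := by
      intro u v w
      induction w with
      | nil =>
        intro x y hx hy hx' hy'
        obtain rfl : x = y := Sum.inl.inj (hx.symm.trans hy)
        exact Reachable.refl _
      | @cons u m v h p ih =>
        intro x y hx hy hx' hy'
        have hm : ∃ z, m.1 = Sum.inl z ∧
            (Sum.inl z : β ⊕ (α ⊕ Sym2 α)) ∈ C (ι a') := by
          rcases hmm : m.1 with z | (c | e)
          · refine ⟨z, rfl, ?_⟩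
            have := m.2.1
            rwa [hmm] at this
          · exfalso
            have := m.2.1
            rw [hmm] at this
            exact F3 a' c this
          · exfalso
            exact m.2.2 ⟨m.2.1, e, hmm⟩
        obtain ⟨z, hmz, hz'⟩ := hm
        have hadj : G.Adj x z := by
          have hGG : (GExt H H' ι f G).Adj u.1 m.1 := h
          rw [hx, hmz] at hGG
          exact gext_adj_inl.mp hGG
        have step : (G.induce {x : β | (Sum.inl x : β ⊕ (α ⊕ Sym2 α)) ∈ C (ι a')}).Adj
            ⟨x, hx'⟩ ⟨z, hz'⟩ := hadj
        exact step.reachable.trans (ih z y hmz hy hz' hy')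
    haveI : Nonempty ↥{x : β | (Sum.inl x : β ⊕ (α ⊕ Sym2 α)) ∈ C (ι a')} :=
      ⟨⟨f a', hmemroot⟩⟩
    refine ⟨fun u v => ?_⟩
    have hu : u.1 ∈ {x : β | (Sum.inl x : β ⊕ (α ⊕ Sym2 α)) ∈ C (ι a')} := u.2
    have hv : v.1 ∈ {x : β | (Sum.inl x : β ⊕ (α ⊕ Sym2 α)) ∈ C (ι a')} := v.2
    have hu' : (Sum.inl u.1 : β ⊕ (α ⊕ Sym2 α)) ∈ s \ t := by
      refine ⟨hu, ?_⟩
      rintro ⟨-, e, hh⟩; simp at hh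
    have hv' : (Sum.inl v.1 : β ⊕ (α ⊕ Sym2 α)) ∈ s \ t := by
      refine ⟨hv, ?_⟩
      rintro ⟨-, e, hh⟩; simp at hh
    obtain ⟨w⟩ := hcon2.preconnected ⟨Sum.inl u.1, hu'⟩ ⟨Sum.inl v.1, hv'⟩
    exact transfer _ _ w u.1 v.1 rfl rfl hu hv
  · -- disjointness
    intro a' b' hne
    have hdis := hdisj (fun hh => hne (ι.injective hh))
    exact Set.disjoint_left.mpr fun {x} hx hy => Set.disjoint_left.mp hdis hx hy
  · -- edges
    intro a' b' hab'
    obtain ⟨x, hx, y, hy, hxy⟩ := hedge _ _ (hι a' b' hab')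
    have nogadget : ∀ (c' d' : α'), H'.Adj c' d' → ∀ (x y : β ⊕ (α ⊕ Sym2 α)),
        x ∈ C (ι c') → y ∈ C (ι d') → (GExt H H' ι f G).Adj x y →
        (∃ e : Sym2 α, y = Sum.inr (Sum.inr e)) → False := by
      rintro c' d' hcd x y hxc hyd hxy ⟨e, rfl⟩
      obtain ⟨b, hvb, ho, hes⟩ := F5 (ι d') e hyd
      obtain ⟨a0, b0, hab0, ho0, hxfe, hes0⟩ := gext_adj_gadget hxy
      obtain rfl : a0 = ι c' := F1 _ _ (hxfe ▸ hxc)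
      rw [hes, Sym2.eq_iff] at hes0
      rcases hes0 with ⟨h1, h2⟩ | ⟨h1, h2⟩
      · exact hcd.ne (ι.injective h1).symm
      · exact ho0 ⟨(c', d'), rfl, h1, hcd⟩
    obtain ⟨z2, rfl⟩ : ∃ z, y = Sum.inl z := by
      match y with
      | .inl z => exact ⟨z, rfl⟩
      | .inr (.inl c) => exact absurd hy (fun hh => F3 b' c hh)
      | .inr (.inr e) => exact absurd (nogadget a' b' hab' x _ hx hy hxy ⟨e, rfl⟩) not_false
    obtain ⟨z1, rfl⟩ : ∃ z, x = Sum.inl z := by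
      match x with
      | .inl z => exact ⟨z, rfl⟩
      | .inr (.inl c) => exact absurd hx (fun hh => F3 a' c hh)
      | .inr (.inr e) =>
        exact absurd (nogadget b' a' hab'.symm _ _ hy hx hxy.symm ⟨e, rfl⟩) not_false
    exact ⟨z1, hx, z2, hy, gext_adj_inl.mp hxy⟩
end
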